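/- arXiv:2105.11224 — 2 statements merged into one kernel-verified Lean document; each statement's English description precedes it below -/
import Mathlib

section
/- Let ϑ_P = (ϑ, P) be a primitive random substitution over an alphabet A such that |ϑ(a)| (the common length of words in ϑ(a)) is well-defined for all a ∈ A. If ϑ_P is recognisable, then there exists a smallest natural number κ(ϑ), the recognisability radius of ϑ, with the following property: if x ∈ ϑ([a]) for some a ∈ A and y ∈ X_ϑ satisfies x_{[−κ(ϑ), κ(ϑ)]} = y_{[−κ(ϑ), κ(ϑ)]}, then y ∈ ϑ([a]). -/
open Filter MeasureTheory

namespace RandomSubstitutionTheory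

variable {A : Type*} [Fintype A] [DecidableEq A]

/-- The set of realisations of `ϑ(u)` for a word `u`. -/
def reals (θ : A → Finset (List A)) : List A → Finset (List A)
  | [] => {[]}
  | a :: u => (θ a).biUnion fun v => (reals θ u).image fun w => v ++ w

/-- The set of realisations of `ϑ^n(u)` for a word `u`. -/
def realsIter (θ : A → Finset (List A)) : ℕ → List A → Finset (List A)
  | 0, u => {u}
  | n + 1, u => (reals θ u).biUnion fun v => realsIter θ n v

/-- `wordProb θ P u w` is the probability `P[ϑ_P(u) = w]`, each letter of `u` being
substituted independently. -/
noncomputable def wordProb (θ : A → Finset (List A)) (P : A → List A → ℝ) :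
    List A → List A → ℝ
  | [], w => if w = [] then 1 else 0
  | a :: u, w =>
      ∑ v ∈ θ a, P a v * (if v <+: w then wordProb θ P u (w.drop v.length) else 0)

/-- `iterProb θ P n u w` is the probability `P[ϑ_P^n(u) = w]` of the induced Markov chain. -/
noncomputable def iterProb (θ : A → Finset (List A)) (P : A → List A → ℝ) :
    ℕ → List A → List A → ℝ
  | 0, u, w => if u = w then 1 else 0
  | n + 1, u, w => ∑ v ∈ reals θ u, wordProb θ P u v * iterProb θ P n v w

/-- The substitution matrix `M_{ij} = E[|ϑ_P(a_j)|_{a_i}]`. -/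
noncomputable def substM (θ : A → Finset (List A)) (P : A → List A → ℝ) :
    Matrix A A ℝ :=
  Matrix.of fun i j => ∑ w ∈ θ j, P j w * (w.count i : ℝ)

/-- The defining data of a random substitution: nonempty finite sets of nonempty words
and strictly positive probability vectors. -/
def IsRandomSubstitution (θ : A → Finset (List A)) (P : A → List A → ℝ) : Prop :=
  (∀ a, (θ a).Nonempty) ∧ (∀ a, ∀ w ∈ θ a, w ≠ []) ∧
    (∀ a, ∀ w ∈ θ a, 0 < P a w) ∧ (∀ a w, w ∉ θ a → P a w = 0) ∧
    ∀ a, ∑ w ∈ θ a, P a w = 1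

/-- Primitivity of the substitution matrix: some power has strictly positive entries. -/
def IsPrimitive (θ : A → Finset (List A)) (P : A → List A → ℝ) : Prop :=
  ∃ k : ℕ, ∀ i j : A, 0 < (substM θ P ^ k) i j

/-- The Perron–Frobenius eigenvalue is `> 1` (witnessed by a positive right eigenvector). -/
def IsExpanding (θ : A → Finset (List A)) (P : A → List A → ℝ) : Prop :=
  ∃ lam : ℝ, 1 < lam ∧ ∃ R : A → ℝ, (∀ a, 0 < R a) ∧ (substM θ P).mulVec R = lam • R

/-- A word is legal if it occurs as a subword of some level-`k` inflation word. -/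
def Legal (θ : A → Finset (List A)) (u : List A) : Prop :=
  ∃ (a : A) (k : ℕ) (w : List A), w ∈ realsIter θ k [a] ∧ u <:+: w

/-- All words of length `n` over the alphabet. -/
def allWords (A : Type*) [Fintype A] [DecidableEq A] (n : ℕ) : Finset (List A) :=
  (Finset.univ : Finset (Fin n → A)).image List.ofFn

/-- All legal words of length `n`. -/
noncomputable def legalWords (θ : A → Finset (List A)) (n : ℕ) : Finset (List A) :=
  letI := Classical.decPred (Legal θ)
  (allWords A n).filter (Legal θ)

/-- The left shift on bi-infinite sequences. -/
def shift : (ℤ → A) → ℤ → A := fun x i => x (i + 1)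

/-- The finite word of length `n` read off a bi-infinite sequence starting at position `m`. -/
def window (x : ℤ → A) (m : ℤ) (n : ℕ) : List A :=
  (List.range n).map fun t => x (m + (t : ℤ))

/-- The random substitution subshift `X_ϑ`. -/
def Xtheta (θ : A → Finset (List A)) : Set (ℤ → A) :=
  {x | ∀ (m : ℤ) (n : ℕ), Legal θ (window x m n)}

/-- The cylinder set of the word `v` at position `m`. -/
def cylinder (v : List A) (m : ℤ) : Set (ℤ → A) :=
  {x | window x m v.length = v}

/-- The number `|w|_v` of (possibly overlapping) occurrences of `v` in `w`. -/
def occCount (v w : List A) : ℕ :=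
  ((List.range w.length).filter fun i => decide (v <+: w.drop i)).length

/-- Expected length `E[|ϑ_P^k(a)|]`. -/
noncomputable def expLen (θ : A → Finset (List A)) (P : A → List A → ℝ)
    (k : ℕ) (a : A) : ℝ :=
  ∑ w ∈ realsIter θ k [a], iterProb θ P k [a] w * (w.length : ℝ)

/-- Expected number of occurrences `E[|ϑ_P^k(a)|_v]`. -/
noncomputable def expCount (θ : A → Finset (List A)) (P : A → List A → ℝ)
    (k : ℕ) (a : A) (v : List A) : ℝ :=
  ∑ w ∈ realsIter θ k [a], iterProb θ P k [a] w * (occCount v w : ℝ)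

/-- `μ` is the frequency measure of `(ϑ, P)`: a shift-invariant Borel probability measure
supported on `X_ϑ` whose cylinder values are the expected word frequencies. -/
def IsFrequencyMeasure [MeasurableSpace A] (θ : A → Finset (List A))
    (P : A → List A → ℝ) (μ : Measure (ℤ → A)) : Prop :=
  IsProbabilityMeasure μ ∧
    (∀ s : Set (ℤ → A), MeasurableSet s → μ (shift ⁻¹' s) = μ s) ∧
    μ (Xtheta θ) = 1 ∧
    ∀ v : List A, Legal θ v → ∀ (m : ℤ) (a : A),
      Tendsto (fun k : ℕ => expCount θ P k a v / expLen θ P k a) atTop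
        (nhds ((μ (cylinder v m)).toReal))

/-- The `n`-th entropy sum `∑_{u ∈ L_ϑ^n} -μ[u] log μ[u]`. -/
noncomputable def entropySeq [MeasurableSpace A] (θ : A → Finset (List A))
    (μ : Measure (ℤ → A)) (n : ℕ) : ℝ :=
  ∑ u ∈ legalWords θ n, Real.negMulLog ((μ (cylinder u 0)).toReal)

/-- The measure-theoretic (Kolmogorov–Sinai) entropy of the shift with respect to `μ`,
computed along cylinder partitions. -/
noncomputable def measEntropy [MeasurableSpace A] (θ : A → Finset (List A))
    (μ : Measure (ℤ → A)) : ℝ :=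
  limsup (fun n : ℕ => entropySeq θ μ n / (n : ℝ)) atTop

/-- The topological entropy of the subshift `X_ϑ`. -/
noncomputable def topEntropy (θ : A → Finset (List A)) : ℝ :=
  limsup (fun n : ℕ => Real.log ((legalWords θ n).card) / (n : ℝ)) atTop

/-- The entropy vector `H_{k,a} = H(ϑ_P^k(a))`. -/
noncomputable def Hvec (θ : A → Finset (List A)) (P : A → List A → ℝ)
    (k : ℕ) (a : A) : ℝ :=
  ∑ w ∈ realsIter θ k [a], Real.negMulLog (iterProb θ P k [a] w)

/-- The inner product `H_k^T R`. -/
noncomputable def HdotR (θ : A → Finset (List A)) (P : A → List A → ℝ)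
    (R : A → ℝ) (k : ℕ) : ℝ :=
  ∑ a, Hvec θ P k a * R a

/-- Binary entropy `H(p) = -p log p - (1-p) log (1-p)`. -/
noncomputable def binEnt (p : ℝ) : ℝ := Real.negMulLog p + Real.negMulLog (1 - p)

/-- Unique realisation paths: concatenation of level-`k` inflation words of the letters of a
legal word is injective. -/
def UniqueRealisationPaths (θ : A → Finset (List A)) : Prop :=
  ∀ v : List A, Legal θ v → ∀ k : ℕ, ∀ f g : Fin v.length → List A,
    (∀ i, f i ∈ realsIter θ k [v.get i]) → (∀ i, g i ∈ realsIter θ k [v.get i]) →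
      (List.ofFn f).flatten = (List.ofFn g).flatten → f = g

/-- The disjoint set condition. -/
def DisjointSetCondition (θ : A → Finset (List A)) : Prop :=
  ∀ (a : A) (k : ℕ), ∀ u ∈ θ a, ∀ v ∈ θ a, u ≠ v →
    ∀ w, w ∈ realsIter θ k u → w ∉ realsIter θ k v

/-- The identical set condition. -/
def IdenticalSetCondition (θ : A → Finset (List A)) : Prop :=
  ∀ (a : A) (k : ℕ), ∀ u ∈ θ a, ∀ v ∈ θ a, realsIter θ k u = realsIter θ k v

/-- Identical production probabilities. -/
def IdenticalProductionProbabilities (θ : A → Finset (List A))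
    (P : A → List A → ℝ) : Prop :=
  ∀ a : A, ∀ u ∈ θ a, ∀ v ∈ θ a, ∀ (k : ℕ) (w : List A),
    iterProb θ P k u w = iterProb θ P k v w

/-- The disjoint set condition for the `k`-th power `ϑ^k`. -/
def DisjointSetConditionPow (θ : A → Finset (List A)) (k : ℕ) : Prop :=
  ∀ (a : A) (j : ℕ), ∀ u ∈ realsIter θ k [a], ∀ v ∈ realsIter θ k [a], u ≠ v →
    ∀ w, w ∈ realsIter θ (k * j) u → w ∉ realsIter θ (k * j) v

/-- The identical set condition for the `k`-th power `ϑ^k`. -/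
def IdenticalSetConditionPow (θ : A → Finset (List A)) (k : ℕ) : Prop :=
  ∀ (a : A) (j : ℕ), ∀ u ∈ realsIter θ k [a], ∀ v ∈ realsIter θ k [a],
    realsIter θ (k * j) u = realsIter θ (k * j) v

/-- Identical production probabilities for the `k`-th power `ϑ^k`. -/
def IdenticalProductionProbabilitiesPow (θ : A → Finset (List A))
    (P : A → List A → ℝ) (k : ℕ) : Prop :=
  ∀ a : A, ∀ u ∈ realsIter θ k [a], ∀ v ∈ realsIter θ k [a], ∀ (j : ℕ) (w : List A),
    iterProb θ P (k * j) u w = iterProb θ P (k * j) v w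

/-- Compatibility: all realisations of a letter have the same abelianisation. -/
def Compatible (θ : A → Finset (List A)) : Prop :=
  ∀ a : A, ∀ u ∈ θ a, ∀ v ∈ θ a, ∀ b : A, u.count b = v.count b

/-- Constant length `ℓ ≥ 2`. -/
def ConstantLength (θ : A → Finset (List A)) (ℓ : ℕ) : Prop :=
  2 ≤ ℓ ∧ ∀ a : A, ∀ w ∈ θ a, w.length = ℓ

/-- The set `ϑ(y)` of bi-infinite sequences obtained by substituting each letter of `y`,
with the image of `y 0` beginning at position `0`. -/
def substSeq (θ : A → Finset (List A)) (y : ℤ → A) : Set (ℤ → A) :=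
  {x | ∃ v : ℤ → List A, (∀ j, v j ∈ θ (y j)) ∧
    ∃ p : ℤ → ℤ, p 0 = 0 ∧ (∀ j, p (j + 1) = p j + (v j).length) ∧
      ∀ (j : ℤ) (t : ℕ) (ht : t < (v j).length), x (p j + (t : ℤ)) = (v j).get ⟨t, ht⟩}

/-- `ϑ(X)` for a set of bi-infinite sequences. -/
def substImage (θ : A → Finset (List A)) (X : Set (ℤ → A)) : Set (ℤ → A) :=
  ⋃ y ∈ X, substSeq θ y

/-- The set `ϑ^m(y)` of bi-infinite sequences. -/
def substSeqPow (θ : A → Finset (List A)) : ℕ → (ℤ → A) → Set (ℤ → A)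
  | 0, y => {y}
  | m + 1, y => ⋃ z ∈ substSeq θ y, substSeqPow θ m z

/-- The maximal length of an inflation word of the letter `a` (equals the common length
when lengths are well-defined). -/
def maxLen (θ : A → Finset (List A)) (a : A) : ℕ := (θ a).sup List.length

/-- Recognisability: every `x ∈ X_ϑ` has a unique inflation-word decomposition. -/
def Recognisable (θ : A → Finset (List A)) : Prop :=
  ∀ x ∈ Xtheta θ, ∃! p : (ℤ → A) × ℕ,
    p.1 ∈ Xtheta θ ∧ p.2 < maxLen θ (p.1 0) ∧
      (fun i => x (i - (p.2 : ℤ))) ∈ substSeq θ p.1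

/-- Recognisability of the `m`-th power of a constant length-`ℓ` substitution. -/
def RecognisablePow (θ : A → Finset (List A)) (m ℓ : ℕ) : Prop :=
  ∀ x ∈ Xtheta θ, ∃! p : (ℤ → A) × ℕ,
    p.1 ∈ Xtheta θ ∧ p.2 < ℓ ^ m ∧
      (fun i => x (i - (p.2 : ℤ))) ∈ substSeqPow θ m p.1

/-- The set `ϑ^m([a])` of exact images of sequences in the cylinder `[a] ⊆ X_ϑ`. -/
def inflCylPow (θ : A → Finset (List A)) (m : ℕ) (a : A) : Set (ℤ → A) :=
  ⋃ y ∈ {w ∈ Xtheta θ | w 0 = a}, substSeqPow θ m y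

/-- `r` is a radius of local recognisability for `ϑ^m`. -/
def RecogPropPow (θ : A → Finset (List A)) (m r : ℕ) : Prop :=
  ∀ (a : A) (x : ℤ → A), x ∈ inflCylPow θ m a → ∀ y ∈ Xtheta θ,
    (∀ t : ℤ, -(r : ℤ) ≤ t → t ≤ (r : ℤ) → x t = y t) → y ∈ inflCylPow θ m a

/-- The recognisability radius `κ(ϑ^m)`. -/
noncomputable def recogRadiusPow (θ : A → Finset (List A)) (m : ℕ) : ℕ :=
  sInf {r | RecogPropPow θ m r}

/-- The recognisability radius `κ(ϑ)`. -/
noncomputable def recogRadius (θ : A → Finset (List A)) : ℕ := recogRadiusPow θ 1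

/-- The random word `ϑ_P^n(a)` is (a.s.) completely determined by `ϑ_P^{n+k}(a)`
in the Markov chain. -/
def DeterminedBy (θ : A → Finset (List A)) (P : A → List A → ℝ)
    (a : A) (n k : ℕ) : Prop :=
  ∀ v₁ v₂ w : List A, v₁ ∈ realsIter θ n [a] → v₂ ∈ realsIter θ n [a] →
    0 < iterProb θ P n [a] v₁ * iterProb θ P k v₁ w →
      0 < iterProb θ P n [a] v₂ * iterProb θ P k v₂ w → v₁ = v₂

/-- The random words `ϑ_P^n(a)` and `ϑ_P^{n+k}(a)` are independent in the Markov chain. -/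
def IndepSteps (θ : A → Finset (List A)) (P : A → List A → ℝ)
    (a : A) (n k : ℕ) : Prop :=
  ∀ v w : List A,
    iterProb θ P n [a] v * iterProb θ P k v w =
      iterProb θ P n [a] v * iterProb θ P (n + k) [a] w

/-- The substitution matrix of a marginal (deterministic) substitution. -/
def marginalM (ρ : A → List A) : Matrix A A ℝ :=
  Matrix.of fun i j => ((ρ j).count i : ℝ)

/-- Geometric compatibility: a single positive left eigenvector with eigenvalue `λ > 1`
for all marginals. -/
def GeometricallyCompatible (θ : A → Finset (List A)) : Prop :=
  ∃ lam : ℝ, 1 < lam ∧ ∃ L : A → ℝ, (∀ a, 0 < L a) ∧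
    ∀ ρ : A → List A, (∀ a, ρ a ∈ θ a) → Matrix.vecMul L (marginalM ρ) = lam • L



section StatementFourteenAux

lemma exists_ulim {B : Type*} (U : Ultrafilter ℕ) (f : ℕ → B) {S : Set B}
    (hS : S.Finite) (h : ∀ n, f n ∈ S) : ∃ b, {n | f n = b} ∈ U := by
  by_contra hc
  push_neg at hc
  haveI : Finite S := hS
  have h2 : ∀ b : S, {n | f n = (b : B)}ᶜ ∈ U := fun b =>
    (Ultrafilter.compl_mem_iff_notMem).2 (hc b)
  have h3 : (⋂ b : S, {n | f n = (b : B)}ᶜ) ∈ U := Filter.iInter_mem.2 h2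
  obtain ⟨n, hn⟩ := Filter.nonempty_of_mem h3
  exact (Set.mem_iInter.1 hn ⟨f n, h n⟩) rfl

lemma window_congr {x y : ℤ → A} {m : ℤ} {n : ℕ}
    (h : ∀ t : ℕ, t < n → x (m + (t : ℤ)) = y (m + (t : ℤ))) :
    window x m n = window y m n := by
  unfold window
  apply List.map_congr_left
  intro t ht
  simp only [bind_pure_comp, List.bind_eq_flatMap, List.mem_flatMap, List.mem_range,
    List.pure_def, List.mem_singleton] at ht
  obtain ⟨s, hs, rfl⟩ := ht
  exact h s hs

lemma ulim_mem_Xtheta (θ : A → Finset (List A)) (U : Ultrafilter ℕ)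
    (z : ℕ → ℤ → A) (zl : ℤ → A)
    (hz : ∀ t, {n | z n t = zl t} ∈ U) (hX : ∀ n, z n ∈ Xtheta θ) :
    zl ∈ Xtheta θ := by
  intro m len
  have hb : (⋂ t : Fin len, {n | z n (m + ((t : ℕ) : ℤ)) = zl (m + ((t : ℕ) : ℤ))}) ∈ U :=
    Filter.iInter_mem.2 fun t => hz _
  obtain ⟨n, hn⟩ := Filter.nonempty_of_mem hb
  have hw : window zl m len = window (z n) m len :=
    window_congr fun t ht => (Set.mem_iInter.1 hn ⟨t, ht⟩).symm
  rw [hw]; exact hX n m len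

lemma ulim_mem_substSeq (θ : A → Finset (List A)) (U : Ultrafilter ℕ)
    (z x : ℕ → ℤ → A) (zl xl : ℤ → A)
    (hz : ∀ t, {n | z n t = zl t} ∈ U) (hx : ∀ t, {n | x n t = xl t} ∈ U)
    (hmem : ∀ n, x n ∈ substSeq θ (z n)) : xl ∈ substSeq θ zl := by
  simp only [substSeq, Set.mem_setOf_eq] at hmem ⊢
  choose v hv p hp0 hprec hval using hmem
  have hSfin : (⋃ a : A, (θ a : Set (List A))).Finite :=
    Set.finite_iUnion fun a => (θ a).finite_toSet
  have hvS : ∀ j : ℤ, ∃ w, {n | v n j = w} ∈ U := fun j =>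
    exists_ulim U (fun n => v n j) hSfin (fun n => Set.mem_iUnion.2 ⟨_, hv n j⟩)
  choose vl hvl using hvS
  have hplE : ∀ j : ℤ, ∃ c : ℤ, {n | p n j = c} ∈ U := by
    intro j
    induction j using Int.induction_on with
    | zero =>
      refine ⟨0, ?_⟩
      have he : {n : ℕ | p n 0 = 0} = Set.univ := Set.eq_univ_of_forall hp0
      rw [he]; exact Filter.univ_mem
    | succ i ih =>
      obtain ⟨c, hc⟩ := ih
      refine ⟨c + (vl i).length, ?_⟩
      filter_upwards [hc, hvl (i : ℤ)] with n h1 h2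
      rw [hprec n i, h1, h2]
    | pred i ih =>
      obtain ⟨c, hc⟩ := ih
      refine ⟨c - (vl (-(i : ℤ) - 1)).length, ?_⟩
      filter_upwards [hc, hvl (-(i : ℤ) - 1)] with n h1 h2
      have h3 := hprec n (-(i : ℤ) - 1)
      rw [show (-(i : ℤ) - 1) + 1 = -(i : ℤ) by ring] at h3
      rw [h2] at h3
      omega
  choose pl hpl using hplE
  have getcongr : ∀ (l l' : List A) (t : ℕ) (h : l = l') (ht : t < l.length)
      (ht' : t < l'.length), l.get ⟨t, ht⟩ = l'.get ⟨t, ht'⟩ := by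
    rintro l l' t rfl ht ht'; rfl
  refine ⟨vl, ?_, pl, ?_, ?_, ?_⟩
  · intro j
    obtain ⟨n, h1, h2⟩ := Filter.nonempty_of_mem (Filter.inter_mem (hvl j) (hz j))
    simp only [Set.mem_setOf_eq] at h1 h2
    rw [← h1, ← h2]; exact hv n j
  · obtain ⟨n, h1⟩ := Filter.nonempty_of_mem (hpl 0)
    simp only [Set.mem_setOf_eq] at h1
    rw [← h1]; exact hp0 n
  · intro j
    obtain ⟨n, h1, h2, h3⟩ := Filter.nonempty_of_mem
      (Filter.inter_mem (hpl (j + 1)) (Filter.inter_mem (hpl j) (hvl j)))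
    simp only [Set.mem_setOf_eq] at h1 h2 h3
    rw [← h1, ← h2, ← h3]; exact hprec n j
  · intro j t ht
    obtain ⟨n, h1, h2, h3⟩ := Filter.nonempty_of_mem
      (Filter.inter_mem (hpl j) (Filter.inter_mem (hvl j) (hx (pl j + (t : ℤ)))))
    simp only [Set.mem_setOf_eq] at h1 h2 h3
    have ht' : t < (v n j).length := by rw [h2]; exact ht
    rw [← h3, ← h1, hval n j t ht']
    exact getcongr _ _ _ h2 ht' ht

lemma substSeqPow_one (θ : A → Finset (List A)) (y : ℤ → A) :
    substSeqPow θ 1 y = substSeq θ y := by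
  show (⋃ z ∈ substSeq θ y, substSeqPow θ 0 z) = substSeq θ y
  simp [substSeqPow]

lemma mem_inflCylPow_one {θ : A → Finset (List A)} {a : A} {x : ℤ → A} :
    x ∈ inflCylPow θ 1 a ↔ ∃ z, (z ∈ Xtheta θ ∧ z 0 = a) ∧ x ∈ substSeq θ z := by
  simp only [inflCylPow, Set.mem_iUnion, substSeqPow_one, Set.mem_sep_iff, exists_prop]

end StatementFourteenAux

theorem statement14 {A : Type*} [Fintype A] [DecidableEq A]
    (θ : A → Finset (List A)) (P : A → List A → ℝ)
    (hRS : IsRandomSubstitution θ P) (hprim : IsPrimitive θ P) (hexp : IsExpanding θ P)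
    (hlen : ∀ a : A, ∀ u ∈ θ a, ∀ v ∈ θ a, u.length = v.length)
    (hrec : Recognisable θ) :
    ∃ κ : ℕ, IsLeast {r : ℕ | RecogPropPow θ 1 r} κ := by
  have hne : Set.Nonempty {r : ℕ | RecogPropPow θ 1 r} := by
    by_contra hcon
    have hno : ∀ r : ℕ, ¬ RecogPropPow θ 1 r := fun r hr => hcon ⟨r, hr⟩
    have hw : ∀ r : ℕ, ∃ a xx, xx ∈ inflCylPow θ 1 a ∧ ∃ yy, yy ∈ Xtheta θ ∧
        (∀ t : ℤ, -(r : ℤ) ≤ t → t ≤ (r : ℤ) → xx t = yy t) ∧ yy ∉ inflCylPow θ 1 a := by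
      intro r
      have h := hno r
      unfold RecogPropPow at h
      push_neg at h
      obtain ⟨a, xx, hx, yy, hy, hag, hn⟩ := h
      exact ⟨a, xx, hx, yy, hy, hag, hn⟩
    choose a x hxmem y hyX hagree hynot using hw
    set U : Ultrafilter ℕ := Ultrafilter.of Filter.cofinite with hUdef
    have hUc : (U : Filter ℕ) ≤ Filter.cofinite := Ultrafilter.of_le _
    obtain ⟨a0, ha0⟩ := exists_ulim U a Set.finite_univ fun _ => Set.mem_univ _
    have hxd : ∀ n, ∃ z, (z ∈ Xtheta θ ∧ z 0 = a n) ∧ x n ∈ substSeq θ z :=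
      fun n => mem_inflCylPow_one.1 (hxmem n)
    choose z hzprop hxz using hxd
    have hzX : ∀ n, z n ∈ Xtheta θ := fun n => (hzprop n).1
    have hz0 : ∀ n, z n 0 = a n := fun n => (hzprop n).2
    have hyd := fun n => (hrec (y n) (hyX n)).exists
    choose pr hprX hprk hprs using hyd
    choose w hwlim using fun t : ℤ =>
      exists_ulim U (fun n => y n t) Set.finite_univ fun _ => Set.mem_univ _
    have hxlim : ∀ t, {n | x n t = w t} ∈ U := by
      intro t
      have hcof : {n : ℕ | t.natAbs ≤ n} ∈ U := by
        apply hUc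
        rw [Nat.cofinite_eq_atTop]
        exact Filter.mem_atTop _
      filter_upwards [hwlim t, hcof] with n h1 h2
      rw [← h1]
      exact hagree n t (by omega) (by omega)
    choose zl hzl using fun t : ℤ =>
      exists_ulim U (fun n => z n t) Set.finite_univ fun _ => Set.mem_univ _
    choose z'l hz'l using fun t : ℤ =>
      exists_ulim U (fun n => (pr n).1 t) Set.finite_univ fun _ => Set.mem_univ _
    set B : ℕ := Finset.univ.sup (maxLen θ) with hB
    obtain ⟨kl, hkl⟩ := exists_ulim U (fun n => (pr n).2) (Set.finite_Iio (B + 1))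
      (fun n => by
        have h1 := hprk n
        have hle : maxLen θ ((pr n).1 0) ≤ B := Finset.le_sup (Finset.mem_univ _)
        have h2 : (pr n).2 < B + 1 := by omega
        exact Set.mem_Iio.2 h2)
    have hwX : w ∈ Xtheta θ := ulim_mem_Xtheta θ U y w hwlim hyX
    have hzlX : zl ∈ Xtheta θ := ulim_mem_Xtheta θ U z zl hzl hzX
    have hz'lX : z'l ∈ Xtheta θ := ulim_mem_Xtheta θ U (fun n => (pr n).1) z'l hz'l hprX
    have hw_sub : w ∈ substSeq θ zl := ulim_mem_substSeq θ U z x zl w hzl hxlim hxz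
    have hshift : (fun i => w (i - (kl : ℤ))) ∈ substSeq θ z'l := by
      refine ulim_mem_substSeq θ U (fun n => (pr n).1)
        (fun n i => y n (i - ((pr n).2 : ℤ))) z'l (fun i => w (i - (kl : ℤ))) hz'l ?_ hprs
      intro t
      filter_upwards [hkl, hwlim (t - (kl : ℤ))] with n h1 h2
      show y n (t - ((pr n).2 : ℤ)) = w (t - (kl : ℤ))
      rw [h1]; exact h2
    have hmaxpos : ∀ b : A, 0 < maxLen θ b := by
      intro b
      obtain ⟨u, hu⟩ := hRS.1 b
      have hlen0 : 0 < u.length := List.length_pos_iff.2 (hRS.2.1 b u hu)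
      exact lt_of_lt_of_le hlen0 (Finset.le_sup hu)
    have hkl_lt : kl < maxLen θ (z'l 0) := by
      obtain ⟨n, h1, h2⟩ := Filter.nonempty_of_mem (Filter.inter_mem hkl (hz'l 0))
      simp only [Set.mem_setOf_eq] at h1 h2
      rw [← h1, ← h2]; exact hprk n
    obtain ⟨q, hq, huniq⟩ := hrec w hwX
    have h1 : ((zl, 0) : (ℤ → A) × ℕ) = q :=
      huniq _ ⟨hzlX, hmaxpos _, by simpa using hw_sub⟩
    have h2 : ((z'l, kl) : (ℤ → A) × ℕ) = q := huniq _ ⟨hz'lX, hkl_lt, hshift⟩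
    have heq : ((zl, 0) : (ℤ → A) × ℕ) = (z'l, kl) := h1.trans h2.symm
    have hzz : zl = z'l := congrArg Prod.fst heq
    have hkl0 : (0 : ℕ) = kl := congrArg Prod.snd heq
    have hz'l0 : z'l 0 = a0 := by
      rw [← hzz]
      obtain ⟨n, h1', h2'⟩ := Filter.nonempty_of_mem (Filter.inter_mem (hzl 0) ha0)
      simp only [Set.mem_setOf_eq] at h1' h2'
      rw [← h1', hz0 n, h2']
    obtain ⟨n, hn1, hn2, hn3⟩ := Filter.nonempty_of_mem
      (Filter.inter_mem hkl (Filter.inter_mem (hz'l 0) ha0))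
    simp only [Set.mem_setOf_eq] at hn1 hn2 hn3
    apply hynot n
    refine mem_inflCylPow_one.2 ⟨(pr n).1, ⟨hprX n, ?_⟩, ?_⟩
    · rw [hn2, hz'l0, hn3]
    · have hk0 : (pr n).2 = 0 := by rw [hn1, ← hkl0]
      have hmem := hprs n
      simp only [hk0, Nat.cast_zero, sub_zero] at hmem
      exact hmem
  exact ⟨sInf {r : ℕ | RecogPropPow θ 1 r}, Nat.sInf_mem hne,
    fun r hr => Nat.sInf_le hr⟩

end RandomSubstitutionTheory
end

section
/- Let ϑ_P = (ϑ, P) be a primitive random substitution over an alphabet A such that |ϑ(a)| (the common length of words in ϑ(a)) is well-defined for all a ∈ A. If ϑ_P is recognisable, then it satisfies the disjoint set condition. -/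
open Filter MeasureTheory

namespace RandomSubstitutionTheory

variable {A : Type*} [Fintype A] [DecidableEq A]

set_option linter.unusedSectionVars false

section Aux

variable {θ : A → Finset (List A)}

lemma mem_reals_nil {w : List A} : w ∈ reals θ [] ↔ w = [] := by
  simp [reals]

lemma mem_reals_cons {a : A} {u w : List A} :
    w ∈ reals θ (a :: u) ↔ ∃ v ∈ θ a, ∃ x ∈ reals θ u, w = v ++ x := by
  simp [reals, eq_comm]

lemma mem_reals_singleton {a : A} {w : List A} : w ∈ reals θ [a] ↔ w ∈ θ a := by
  simp [mem_reals_cons, mem_reals_nil]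

lemma mem_reals_append {u u' w : List A} :
    w ∈ reals θ (u ++ u') ↔ ∃ x ∈ reals θ u, ∃ y ∈ reals θ u', w = x ++ y := by
  induction u generalizing w with
  | nil => simp [mem_reals_nil]
  | cons a u ih =>
      simp only [List.cons_append, mem_reals_cons, ih]
      constructor
      · rintro ⟨v, hv, x, ⟨x1, hx1, y, hy, rfl⟩, rfl⟩
        exact ⟨v ++ x1, ⟨v, hv, x1, hx1, rfl⟩, y, hy, by simp⟩
      · rintro ⟨x, ⟨v, hv, x1, hx1, rfl⟩, y, hy, rfl⟩
        exact ⟨v, hv, x1 ++ y, ⟨x1, hx1, y, hy, rfl⟩, by simp⟩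

lemma reals_nonempty (h : ∀ a, (θ a).Nonempty) (u : List A) : (reals θ u).Nonempty := by
  induction u with
  | nil => exact ⟨[], by simp [mem_reals_nil]⟩
  | cons a u ih =>
      obtain ⟨v, hv⟩ := h a
      obtain ⟨x, hx⟩ := ih
      exact ⟨v ++ x, mem_reals_cons.2 ⟨v, hv, x, hx, rfl⟩⟩

lemma mem_realsIter_zero {u w : List A} : w ∈ realsIter θ 0 u ↔ w = u := by
  simp [realsIter]

lemma mem_realsIter_succ {n : ℕ} {u w : List A} :
    w ∈ realsIter θ (n + 1) u ↔ ∃ v ∈ reals θ u, w ∈ realsIter θ n v := by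
  simp [realsIter]

lemma mem_realsIter_append {n : ℕ} {u u' w : List A} :
    w ∈ realsIter θ n (u ++ u') ↔
      ∃ x ∈ realsIter θ n u, ∃ y ∈ realsIter θ n u', w = x ++ y := by
  induction n generalizing u u' w with
  | zero => simp [mem_realsIter_zero]
  | succ n ih =>
      simp only [mem_realsIter_succ, mem_reals_append]
      constructor
      · rintro ⟨v, ⟨x, hx, y, hy, rfl⟩, hw⟩
        obtain ⟨x', hx', y', hy', rfl⟩ := ih.1 hw
        exact ⟨x', ⟨x, hx, hx'⟩, y', ⟨y, hy, hy'⟩, rfl⟩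
      · rintro ⟨x', ⟨x, hx, hx'⟩, y', ⟨y, hy, hy'⟩, rfl⟩
        exact ⟨x ++ y, ⟨x, hx, y, hy, rfl⟩, ih.2 ⟨x', hx', y', hy', rfl⟩⟩

lemma realsIter_nonempty (h : ∀ a, (θ a).Nonempty) (n : ℕ) (u : List A) :
    (realsIter θ n u).Nonempty := by
  induction n generalizing u with
  | zero => exact ⟨u, by simp [mem_realsIter_zero]⟩
  | succ n ih =>
      obtain ⟨v, hv⟩ := reals_nonempty h u
      obtain ⟨w, hw⟩ := ih v
      exact ⟨w, mem_realsIter_succ.2 ⟨v, hv, hw⟩⟩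

lemma mem_realsIter_add {m n : ℕ} {u w : List A} :
    w ∈ realsIter θ (m + n) u ↔ ∃ v ∈ realsIter θ m u, w ∈ realsIter θ n v := by
  induction m generalizing u with
  | zero => simp [mem_realsIter_zero]
  | succ m ih =>
      have : m + 1 + n = (m + n) + 1 := by omega
      rw [this, mem_realsIter_succ]
      constructor
      · rintro ⟨v, hv, hw⟩
        obtain ⟨v', hv', hw'⟩ := ih.1 hw
        exact ⟨v', mem_realsIter_succ.2 ⟨v, hv, hv'⟩, hw'⟩
      · rintro ⟨v', hv', hw'⟩
        obtain ⟨v, hv, hv'⟩ := mem_realsIter_succ.1 hv'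
        exact ⟨v, hv, ih.2 ⟨v', hv', hw'⟩⟩

lemma mem_realsIter_succ' {n : ℕ} {u w : List A} :
    w ∈ realsIter θ (n + 1) u ↔ ∃ v ∈ realsIter θ n u, w ∈ reals θ v := by
  rw [mem_realsIter_add (m := n) (n := 1)]
  constructor
  · rintro ⟨v, hv, hw⟩
    obtain ⟨v', hv', hw'⟩ := mem_realsIter_succ.1 hw
    rw [mem_realsIter_zero] at hw'
    exact ⟨v, hv, hw' ▸ hv'⟩
  · rintro ⟨v, hv, hw⟩
    exact ⟨v, hv, mem_realsIter_succ.2 ⟨w, hw, mem_realsIter_zero.2 rfl⟩⟩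

lemma length_le_of_mem_reals (hne : ∀ a, ∀ w ∈ θ a, w ≠ []) {u w : List A}
    (h : w ∈ reals θ u) : u.length ≤ w.length := by
  induction u generalizing w with
  | nil => simp
  | cons a u ih =>
      obtain ⟨v, hv, x, hx, rfl⟩ := mem_reals_cons.1 h
      have h1 : 1 ≤ v.length := by
        have := hne a v hv
        cases v with
        | nil => simp at this
        | cons _ _ => simp
      have := ih hx
      simp only [List.length_append, List.length_cons]
      omega

lemma length_le_of_mem_realsIter (hne : ∀ a, ∀ w ∈ θ a, w ≠ []) {n : ℕ} {u w : List A}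
    (h : w ∈ realsIter θ n u) : u.length ≤ w.length := by
  induction n generalizing u w with
  | zero => rw [mem_realsIter_zero] at h; exact h ▸ le_refl _
  | succ n ih =>
      obtain ⟨v, hv, hw⟩ := mem_realsIter_succ.1 h
      exact le_trans (length_le_of_mem_reals hne hv) (ih hw)

lemma ne_nil_of_mem_realsIter (hne : ∀ a, ∀ w ∈ θ a, w ≠ []) {n : ℕ} {u w : List A}
    (hu : u ≠ []) (h : w ∈ realsIter θ n u) : w ≠ [] := by
  have := length_le_of_mem_realsIter hne h
  have h1 : 1 ≤ u.length := by cases u with | nil => simp at hu | cons _ _ => simp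
  intro hw
  rw [hw] at this
  simp only [List.length_nil, Nat.le_zero, List.length_eq_zero_iff] at this
  exact hu this

lemma mem_realsIter_nil {n : ℕ} {w : List A} : w ∈ realsIter θ n [] ↔ w = [] := by
  induction n with
  | zero => simp [mem_realsIter_zero]
  | succ n ih =>
      rw [mem_realsIter_succ]
      constructor
      · rintro ⟨v, hv, hw⟩
        rw [mem_reals_nil] at hv
        subst hv
        exact ih.1 hw
      · rintro rfl
        exact ⟨[], mem_reals_nil.2 rfl, ih.2 rfl⟩

/-- Per-letter decomposition of a realisation of `ϑ^k(u)`. -/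
lemma realsIter_decomp {k : ℕ} {u w : List A} (h : w ∈ realsIter θ k u) :
    ∃ G : List (List A), G.length = u.length ∧ G.flatten = w ∧
      ∀ (i : ℕ) (x : List A) (c : A), G[i]? = some x → u[i]? = some c → x ∈ realsIter θ k [c] := by
  induction u generalizing w with
  | nil =>
      rw [mem_realsIter_nil] at h
      exact ⟨[], rfl, by simp [h], by simp⟩
  | cons a u ih =>
      have : a :: u = [a] ++ u := rfl
      rw [this, mem_realsIter_append] at h
      obtain ⟨x, hx, y, hy, rfl⟩ := h
      obtain ⟨G, hG1, hG2, hG3⟩ := ih hy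
      refine ⟨x :: G, by simp [hG1], by simp [hG2], ?_⟩
      intro i z c hz hc
      cases i with
      | zero =>
          simp only [List.getElem?_cons_zero, Option.some.injEq] at hz hc
          subst hz; subst hc; exact hx
      | succ i =>
          simp only [List.getElem?_cons_succ] at hz hc
          exact hG3 i z c hz hc

/-- Combine per-letter realisations. -/
lemma flatten_mem_realsIter {k : ℕ} {u : List A} {G : List (List A)}
    (hlen : G.length = u.length)
    (hmem : ∀ (i : ℕ) (x : List A) (c : A), G[i]? = some x → u[i]? = some c → x ∈ realsIter θ k [c]) :
    G.flatten ∈ realsIter θ k u := by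
  induction u generalizing G with
  | nil =>
      have : G = [] := by cases G with | nil => rfl | cons _ _ => simp at hlen
      simp [this, mem_realsIter_nil]
  | cons a u ih =>
      cases G with
      | nil => simp at hlen
      | cons x G =>
          have : a :: u = [a] ++ u := rfl
          rw [this, mem_realsIter_append]
          refine ⟨x, ?_, G.flatten, ?_, by simp⟩
          · simpa using hmem 0 x a (by simp) (by simp)
          · exact ih (by simpa using hlen)
              (fun i z c hz hc => hmem (i+1) z c (by simpa using hz) (by simpa using hc))

end Aux


section Glue

/-- Cumulative block boundaries of a bi-infinite family of words. -/
def cumul (F : ℤ → List A) : ℤ → ℤ := fun j =>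
  if 0 ≤ j then ∑ i ∈ Finset.range j.toNat, ((F i).length : ℤ)
  else -∑ i ∈ Finset.range (-j).toNat, ((F (-(i : ℤ) - 1)).length : ℤ)

lemma cumul_zero (F : ℤ → List A) : cumul F 0 = 0 := by simp [cumul]

lemma cumul_succ (F : ℤ → List A) (j : ℤ) :
    cumul F (j + 1) = cumul F j + ((F j).length : ℤ) := by
  rcases le_or_gt 0 j with hj | hj
  · have h1 : (0:ℤ) ≤ j + 1 := by omega
    have h2 : (j + 1).toNat = j.toNat + 1 := by omega
    simp only [cumul, if_pos hj, if_pos h1, h2, Finset.sum_range_succ]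
    rw [Int.toNat_of_nonneg hj]
  · rcases eq_or_lt_of_le (by omega : j + 1 ≤ 0) with h0 | h0
    · have hj1 : j = -1 := by omega
      subst hj1
      simp [cumul]
    · have h1 : ¬ (0:ℤ) ≤ j + 1 := by omega
      have h2 : ¬ (0:ℤ) ≤ j := by omega
      have h3 : (-j).toNat = (-(j+1)).toNat + 1 := by omega
      simp only [cumul, if_neg h1, if_neg h2, h3, Finset.sum_range_succ]
      have h4 : -((-(j+1)).toNat : ℤ) - 1 = j := by omega
      rw [h4]
      ring

lemma cumul_congr_length {F₁ F₂ : ℤ → List A} (h : ∀ j, (F₁ j).length = (F₂ j).length) :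
    cumul F₁ = cumul F₂ := by
  funext j
  unfold cumul
  simp only [h]

lemma cumul_add_nat (F : ℤ → List A) (p : ℤ) (n : ℕ) :
    cumul F (p + n) = cumul F p + ∑ i ∈ Finset.range n, ((F (p + i)).length : ℤ) := by
  induction n with
  | zero => simp
  | succ n ih =>
      have : p + ((n:ℤ) + 1) = (p + n) + 1 := by ring
      rw [Nat.cast_add, Nat.cast_one, this, cumul_succ, ih, Finset.sum_range_succ]
      ring

lemma cumul_pred (F : ℤ → List A) (j : ℤ) :
    cumul F (j - 1) = cumul F j - ((F (j-1)).length : ℤ) := by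
  have := cumul_succ F (j - 1)
  simp only [sub_add_cancel] at this
  omega

lemma cumul_mono (F : ℤ → List A) (hF : ∀ j, F j ≠ []) {j j' : ℤ} (h : j ≤ j') :
    cumul F j ≤ cumul F j' := by
  have key : ∀ n : ℕ, cumul F (j + n) ≥ cumul F j := by
    intro n
    rw [cumul_add_nat]
    have : ∀ i ∈ Finset.range n, (0:ℤ) ≤ ((F (j + i)).length : ℤ) := fun i _ => by positivity
    have := Finset.sum_nonneg this
    omega
  have : j' = j + ((j' - j).toNat : ℤ) := by omega
  rw [this]
  exact key _

lemma cumul_lt_succ (F : ℤ → List A) (hF : ∀ j, F j ≠ []) (j : ℤ) :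
    cumul F j < cumul F (j + 1) := by
  rw [cumul_succ]
  have : 0 < (F j).length := List.length_pos_iff.mpr (hF j)
  omega

lemma cumul_strict_mono (F : ℤ → List A) (hF : ∀ j, F j ≠ []) {j j' : ℤ} (h : j < j') :
    cumul F j < cumul F j' := by
  have h1 := cumul_lt_succ F hF j
  have h2 := cumul_mono F hF (by omega : j + 1 ≤ j')
  omega

lemma le_cumul_self (F : ℤ → List A) (hF : ∀ j, F j ≠ []) {j : ℤ} (h : 0 ≤ j) :
    j ≤ cumul F j := by
  have key : ∀ n : ℕ, (n:ℤ) ≤ cumul F n := by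
    intro n
    induction n with
    | zero => simp [cumul_zero]
    | succ n ih =>
        have h1 : ((n:ℤ) + 1 : ℤ) = (n:ℤ) + 1 := by push_cast; ring
        push_cast
        rw [cumul_succ]
        have : 0 < (F n).length := List.length_pos_iff.mpr (hF n)
        omega
  have : j = ((j.toNat : ℤ)) := by omega
  rw [this]
  exact key _

lemma cumul_self_le (F : ℤ → List A) (hF : ∀ j, F j ≠ []) {j : ℤ} (h : j ≤ 0) :
    cumul F j ≤ j := by
  have key : ∀ n : ℕ, cumul F (-(n:ℤ)) ≤ -(n:ℤ) := by
    intro n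
    induction n with
    | zero => simp [cumul_zero]
    | succ n ih =>
        have h1 : -((n:ℤ)+1) = (-(n:ℤ)-1) := by ring
        push_cast
        rw [h1, cumul_pred]
        have : 0 < (F (-(n:ℤ)-1)).length := List.length_pos_iff.mpr (hF _)
        push_cast at ih ⊢
        omega
  have : j = -(((-j).toNat : ℤ)) := by omega
  rw [this]
  exact key _

lemma exists_block (F : ℤ → List A) (hF : ∀ j, F j ≠ []) (t : ℤ) :
    ∃ j, cumul F j ≤ t ∧ t < cumul F (j + 1) := by
  have Hbdd : ∃ b, ∀ z : ℤ, cumul F z ≤ t → z ≤ b := by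
    refine ⟨max t 0, fun z hz => ?_⟩
    rcases le_or_gt z 0 with h | h
    · omega
    · have := le_cumul_self F hF (by omega : (0:ℤ) ≤ z)
      omega
  have Hinh : ∃ z : ℤ, cumul F z ≤ t := by
    refine ⟨min t 0, ?_⟩
    have := cumul_self_le F hF (by omega : min t 0 ≤ 0)
    omega
  obtain ⟨j, hj, hmax⟩ := Int.exists_greatest_of_bdd Hbdd Hinh
  refine ⟨j, hj, ?_⟩
  by_contra h
  push_neg at h
  have := hmax (j + 1) h
  omega

lemma block_unique (F : ℤ → List A) (hF : ∀ j, F j ≠ []) {j j' t : ℤ}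
    (h1 : cumul F j ≤ t) (h2 : t < cumul F (j + 1))
    (h3 : cumul F j' ≤ t) (h4 : t < cumul F (j' + 1)) : j = j' := by
  rcases lt_trichotomy j j' with h | h | h
  · have := cumul_mono F hF (by omega : j + 1 ≤ j')
    omega
  · exact h
  · have := cumul_mono F hF (by omega : j' + 1 ≤ j)
    omega

/-- The index of the block containing position `t`, given block boundaries `c`. -/
noncomputable def blockIdxC (c : ℤ → ℤ) (t : ℤ) : ℤ :=
  letI := Classical.dec (∃ j, c j ≤ t ∧ t < c (j + 1))
  if h : ∃ j, c j ≤ t ∧ t < c (j + 1) then h.choose else 0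

/-- The index of the block containing position `t`. -/
noncomputable def blockIdx (F : ℤ → List A) (t : ℤ) : ℤ := blockIdxC (cumul F) t

lemma blockIdx_spec (F : ℤ → List A) (hF : ∀ j, F j ≠ []) (t : ℤ) :
    cumul F (blockIdx F t) ≤ t ∧ t < cumul F (blockIdx F t + 1) := by
  have h := exists_block F hF t
  rw [blockIdx, blockIdxC]
  letI := Classical.dec (∃ j, cumul F j ≤ t ∧ t < cumul F (j + 1))
  rw [dif_pos h]
  exact h.choose_spec

lemma blockIdx_eq (F : ℤ → List A) (hF : ∀ j, F j ≠ []) {j t : ℤ}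
    (h1 : cumul F j ≤ t) (h2 : t < cumul F (j + 1)) : blockIdx F t = j := by
  obtain ⟨g1, g2⟩ := blockIdx_spec F hF t
  exact block_unique F hF g1 g2 h1 h2

/-- The bi-infinite concatenation of a bi-infinite family of (nonempty) words, with
block `0` starting at position `0`. -/
noncomputable def glue [Inhabited A] (F : ℤ → List A) : ℤ → A := fun t =>
  (F (blockIdx F t)).getD (t - cumul F (blockIdx F t)).toNat default

lemma glue_spec [Inhabited A] {F : ℤ → List A} (hF : ∀ j, F j ≠ []) (j : ℤ) (t : ℕ)
    (ht : t < (F j).length) :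
    glue F (cumul F j + t) = (F j).getD t default := by
  have hb : blockIdx F (cumul F j + t) = j := by
    refine blockIdx_eq F hF (by omega) ?_
    rw [cumul_succ]
    omega
  unfold glue
  rw [hb]
  congr 1
  omega

/-- `getD` of the flattening of a finite family of words. -/
lemma getD_flatten_range (d : A) : ∀ (i0 cnt : ℕ) (G : ℕ → List A) (r : ℕ), i0 < cnt →
    r < (G i0).length →
    (((List.range cnt).map G).flatten).getD ((∑ i ∈ Finset.range i0, (G i).length) + r) d
      = (G i0).getD r d := by
  intro i0
  induction i0 with
  | zero =>
      intro cnt G r hcnt hr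
      obtain ⟨c, rfl⟩ : ∃ c, cnt = c + 1 := ⟨cnt - 1, by omega⟩
      rw [List.range_succ_eq_map, List.map_cons, List.flatten_cons]
      simpa using List.getD_append _ _ d r hr
  | succ i0 ih =>
      intro cnt G r hcnt hr
      obtain ⟨c, rfl⟩ : ∃ c, cnt = c + 1 := ⟨cnt - 1, by omega⟩
      rw [List.range_succ_eq_map, List.map_cons, List.flatten_cons, List.map_map]
      rw [Finset.sum_range_succ']
      have hre : (∑ i ∈ Finset.range i0, (G (i + 1)).length) + (G 0).length + r
          = (G 0).length + ((∑ i ∈ Finset.range i0, (G (i+1)).length) + r) := by ring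
      rw [hre, List.getD_append_right _ _ _ _ (by omega)]
      have : (G 0).length + ((∑ i ∈ Finset.range i0, (G (i+1)).length) + r) - (G 0).length
          = (∑ i ∈ Finset.range i0, (G (i+1)).length) + r := by omega
      rw [this]
      exact ih c (fun n => G (n + 1)) r (by omega) hr

/-- `glue` restricted to a run of consecutive blocks is given by their flattening. -/
lemma glue_flatten_block [Inhabited A] {F : ℤ → List A} (hF : ∀ j, F j ≠ []) (j0 : ℤ)
    (cnt : ℕ) (t : ℤ) (h1 : cumul F j0 ≤ t) (h2 : t < cumul F (j0 + cnt)) :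
    glue F t = (((List.range cnt).map (fun i : ℕ => F (j0 + (i:ℤ)))).flatten).getD
      (t - cumul F j0).toNat default := by
  obtain ⟨hs1, hs2⟩ := blockIdx_spec F hF t
  set j := blockIdx F t with hj
  have hj0 : j0 ≤ j := by
    by_contra h
    push_neg at h
    have := cumul_mono F hF (by omega : j + 1 ≤ j0)
    omega
  have hjc : j < j0 + cnt := by
    by_contra h
    push_neg at h
    have := cumul_mono F hF h
    omega
  have hi0 : j = j0 + ((j - j0).toNat : ℤ) := by omega
  set i0 := (j - j0).toNat with hi0def
  set r := (t - cumul F j).toNat with hrdef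
  have hcan : cumul F (j0 + (i0:ℤ)) = cumul F j0 + ∑ i ∈ Finset.range i0, ((F (j0 + i)).length : ℤ) :=
    cumul_add_nat F j0 i0
  have hsum : (↑(∑ i ∈ Finset.range i0, (F (j0 + (i:ℤ))).length) : ℤ)
      = cumul F j - cumul F j0 := by
    push_cast
    rw [← hi0] at hcan
    omega
  have hr : r < (F (j0 + (i0:ℤ))).length := by
    rw [← hi0]
    have := cumul_succ F j
    omega
  have key := getD_flatten_range default i0 cnt (fun i => F (j0 + (i:ℤ))) r (by omega) hr
  have hpos : (t - cumul F j0).toNat = (∑ i ∈ Finset.range i0, (F (j0 + (i:ℤ))).length) + r := by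
    omega
  rw [hpos, key]
  show glue F t = (F (j0 + (i0:ℤ))).getD r default
  rw [← hi0]
  unfold glue
  rw [← hj]

end Glue


section Glue2

lemma list_sum_range (f : ℕ → ℕ) (n : ℕ) :
    (((List.range n).map f)).sum = ∑ i ∈ Finset.range n, f i := by
  induction n with
  | zero => simp
  | succ n ih => rw [List.range_succ, List.map_append, List.sum_append, Finset.sum_range_succ, ih]; simp

lemma cumul_congr_neg {F₁ F₂ : ℤ → List A} (h : ∀ j : ℤ, j < 0 → F₁ j = F₂ j) {j : ℤ}
    (hj : j ≤ 0) : cumul F₁ j = cumul F₂ j := by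
  rcases lt_or_eq_of_le hj with h0 | h0
  · unfold cumul
    rw [if_neg (by omega), if_neg (by omega)]
    congr 1
    exact Finset.sum_congr rfl fun i _ => by rw [h _ (by omega)]
  · subst h0; simp [cumul_zero]

lemma cumul_congr_ge {F₁ F₂ : ℤ → List A} (B : ℕ) (h : ∀ j : ℤ, (B:ℤ) ≤ j → F₁ j = F₂ j)
    (hB : cumul F₁ (B:ℤ) = cumul F₂ (B:ℤ)) {j : ℤ} (hj : (B:ℤ) ≤ j) :
    cumul F₁ j = cumul F₂ j := by
  have hrw : j = (B:ℤ) + (((j - B).toNat : ℤ)) := by omega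
  rw [hrw, cumul_add_nat, cumul_add_nat, hB]
  congr 1
  exact Finset.sum_congr rfl fun i _ => by rw [h _ (by omega)]

lemma cumul_nat_eq_flatten_length (F : ℤ → List A) (B : ℕ) :
    cumul F (B:ℤ) = ((((List.range B).map (fun i : ℕ => F (i:ℤ))).flatten).length : ℤ) := by
  have h1 := cumul_add_nat F 0 B
  simp only [zero_add, cumul_zero] at h1
  rw [h1, List.length_flatten, List.map_map]
  simp only [Function.comp_def]
  rw [list_sum_range (fun i : ℕ => (F (i:ℤ)).length) B]
  push_cast
  rfl

/-- Two families agreeing outside `[0, B)` and with the same flattening over `[0, B)`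
have the same glue. -/
lemma glue_congr_block [Inhabited A] {F₁ F₂ : ℤ → List A} (h1 : ∀ j, F₁ j ≠ [])
    (h2 : ∀ j, F₂ j ≠ []) (B : ℕ)
    (hout : ∀ j : ℤ, j < 0 ∨ (B:ℤ) ≤ j → F₁ j = F₂ j)
    (hflat : ((List.range B).map (fun i : ℕ => F₁ (i:ℤ))).flatten
      = ((List.range B).map (fun i : ℕ => F₂ (i:ℤ))).flatten) :
    glue F₁ = glue F₂ := by
  have hB : cumul F₁ (B:ℤ) = cumul F₂ (B:ℤ) := by
    rw [cumul_nat_eq_flatten_length, cumul_nat_eq_flatten_length, hflat]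
  funext t
  obtain ⟨hs1, hs2⟩ := blockIdx_spec F₁ h1 t
  set j := blockIdx F₁ t with hj
  rcases lt_or_ge t 0 with ht | ht
  · -- t < 0, block j < 0
    have hjneg : j < 0 := by
      by_contra hc
      push_neg at hc
      have := le_cumul_self F₁ h1 hc
      omega
    have e1 : cumul F₁ j = cumul F₂ j := cumul_congr_neg (fun i hi => hout i (Or.inl hi)) (by omega)
    have e2 : cumul F₁ (j+1) = cumul F₂ (j+1) := cumul_congr_neg (fun i hi => hout i (Or.inl hi)) (by omega)
    have hb2 : blockIdx F₂ t = j := blockIdx_eq F₂ h2 (by omega) (by omega)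
    show (F₁ (blockIdx F₁ t)).getD (t - cumul F₁ (blockIdx F₁ t)).toNat default
      = (F₂ (blockIdx F₂ t)).getD (t - cumul F₂ (blockIdx F₂ t)).toNat default
    rw [hb2, ← hj, hout j (Or.inl hjneg), e1]
  · rcases lt_or_ge t (cumul F₁ (B:ℤ)) with htB | htB
    · -- middle range
      have g1 := glue_flatten_block h1 0 B t (by rw [cumul_zero]; omega)
        (by rw [zero_add]; exact htB)
      have g2 := glue_flatten_block h2 0 B t (by rw [cumul_zero]; omega)
        (by rw [zero_add, ← hB]; exact htB)
      rw [g1, g2]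
      simp only [cumul_zero, zero_add, sub_zero]
      rw [hflat]
    · -- t ≥ cumul F₁ B, block j ≥ B
      have hjB : (B:ℤ) ≤ j := by
        by_contra hc
        push_neg at hc
        have := cumul_mono F₁ h1 (by omega : j + 1 ≤ (B:ℤ))
        omega
      have e1 : cumul F₁ j = cumul F₂ j :=
        cumul_congr_ge B (fun i hi => hout i (Or.inr hi)) hB (by omega)
      have e2 : cumul F₁ (j+1) = cumul F₂ (j+1) :=
        cumul_congr_ge B (fun i hi => hout i (Or.inr hi)) hB (by omega)
      have hb2 : blockIdx F₂ t = j := blockIdx_eq F₂ h2 (by omega) (by omega)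
      show (F₁ (blockIdx F₁ t)).getD (t - cumul F₁ (blockIdx F₁ t)).toNat default
        = (F₂ (blockIdx F₂ t)).getD (t - cumul F₂ (blockIdx F₂ t)).toNat default
      rw [hb2, ← hj, hout j (Or.inr hjB), e1]

/-- Grouping blocks does not change the glued sequence. -/
lemma glue_group [Inhabited A] (V W : ℤ → List A) (hV : ∀ j, V j ≠ []) (hW : ∀ j, W j ≠ []) :
    glue (fun j => ((List.range (V j).length).map
        (fun i : ℕ => W (cumul V j + (i:ℤ)))).flatten) = glue W := by
  set H : ℤ → List A := fun j => ((List.range (V j).length).map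
      (fun i : ℕ => W (cumul V j + (i:ℤ)))).flatten with hH
  have lenH : ∀ j, ((H j).length : ℤ) = cumul W (cumul V (j+1)) - cumul W (cumul V j) := by
    intro j
    have e1 : (H j).length = ∑ i ∈ Finset.range (V j).length, (W (cumul V j + (i:ℤ))).length := by
      rw [hH]
      simp only [List.length_flatten, List.map_map]
      exact list_sum_range _ _
    have e2 := cumul_add_nat W (cumul V j) (V j).length
    rw [cumul_succ V j]
    rw [e1]
    push_cast
    omega
  have hHne : ∀ j, H j ≠ [] := by
    intro j hnil
    have h1 : cumul V j < cumul V (j + 1) := cumul_lt_succ V hV j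
    have h2 : cumul W (cumul V j) < cumul W (cumul V (j+1)) := cumul_strict_mono W hW h1
    have := lenH j
    rw [hnil] at this
    simp at this
    omega
  have hcH : ∀ j, cumul H j = cumul W (cumul V j) := by
    intro j
    induction j using Int.induction_on with
    | zero => simp [cumul_zero]
    | succ n ih =>
        rw [cumul_succ H, ih, lenH]
        ring
    | pred n ih =>
        have hp := cumul_pred H (-(n:ℤ))
        have hl := lenH (-(n:ℤ) - 1)
        have hs : (-(n:ℤ) - 1) + 1 = -(n:ℤ) := by ring
        rw [hs] at hl
        omega
  funext t
  obtain ⟨hs1, hs2⟩ := blockIdx_spec W hW t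
  set s := blockIdx W t with hs
  obtain ⟨hj1, hj2⟩ := blockIdx_spec V hV s
  set j := blockIdx V s with hj
  have hbH : blockIdx H t = j := by
    refine blockIdx_eq H hHne ?_ ?_
    · rw [hcH j]
      have : cumul W (cumul V j) ≤ cumul W s := cumul_mono W hW hj1
      omega
    · rw [hcH (j+1)]
      have : cumul W (s + 1) ≤ cumul W (cumul V (j+1)) := cumul_mono W hW (by omega)
      omega
  show (H (blockIdx H t)).getD (t - cumul H (blockIdx H t)).toNat default
    = (W (blockIdx W t)).getD (t - cumul W (blockIdx W t)).toNat default
  rw [hbH, hcH j, ← hs]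
  have hr : (t - cumul W s).toNat < (W s).length := by
    have := cumul_succ W s
    omega
  set i0 := (s - cumul V j).toNat with hi0
  have hseq : s = cumul V j + (i0:ℤ) := by omega
  have hsum : (↑(∑ i ∈ Finset.range i0, (W (cumul V j + (i:ℤ))).length) : ℤ)
      = cumul W s - cumul W (cumul V j) := by
    have hc := cumul_add_nat W (cumul V j) i0
    rw [← hseq] at hc
    push_cast
    omega
  have hi0lt : i0 < (V j).length := by
    have := cumul_succ V j
    omega
  have key := getD_flatten_range default i0 (V j).length
    (fun i : ℕ => W (cumul V j + (i:ℤ))) (t - cumul W s).toNat hi0lt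
    (by show (t - cumul W s).toNat < (W (cumul V j + (i0:ℤ))).length; rw [← hseq]; exact hr)
  have hpos : (t - cumul W (cumul V j)).toNat
      = (∑ i ∈ Finset.range i0, (W (cumul V j + (i:ℤ))).length) + (t - cumul W s).toNat := by
    have h0 : cumul W (cumul V j) ≤ cumul W s := cumul_mono W hW hj1
    omega
  rw [hH]
  show (((List.range (V j).length).map (fun i : ℕ => W (cumul V j + (i:ℤ)))).flatten).getD
      (t - cumul W (cumul V j)).toNat default = (W s).getD (t - cumul W s).toNat default
  rw [hpos, key]
  show (W (cumul V j + (i0:ℤ))).getD (t - cumul W s).toNat default = _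
  rw [← hseq]

lemma cumul_ones {F : ℤ → List A} (h : ∀ j, (F j).length = 1) (j : ℤ) : cumul F j = j := by
  induction j using Int.induction_on with
  | zero => simp [cumul_zero]
  | succ n ih => rw [cumul_succ, ih, h]; push_cast; ring
  | pred n ih =>
      have hp := cumul_pred F (-(n:ℤ))
      rw [h] at hp
      push_cast at hp
      omega

lemma glue_ones [Inhabited A] {F : ℤ → List A} (z : ℤ → A) (h : ∀ j, F j = [z j]) :
    glue F = z := by
  have hne : ∀ j, F j ≠ [] := fun j => by rw [h j]; simp
  have hlen : ∀ j, (F j).length = 1 := fun j => by rw [h j]; rfl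
  funext t
  have hb : blockIdx F t = t :=
    blockIdx_eq F hne (by rw [cumul_ones hlen]) (by rw [cumul_ones hlen]; omega)
  show (F (blockIdx F t)).getD (t - cumul F (blockIdx F t)).toNat default = z t
  rw [hb, cumul_ones hlen, h t]
  simp

end Glue2


section Windows

variable {θ : A → Finset (List A)}

lemma coe_list_int (l : List ℕ) : (do
      let a ← l
      pure ((a:ℤ))) = l.map (fun a : ℕ => (a:ℤ)) := by
  induction l with
  | nil => rfl
  | cons a l ih =>
      show List.flatMap _ _ = _
      rw [List.flatMap_cons]
      simp only [List.map_cons]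
      rw [← ih]
      rfl

lemma window_eq_map (x : ℤ → A) (m : ℤ) (n : ℕ) :
    window x m n = (List.range n).map (fun t : ℕ => x (m + (t:ℤ))) := by
  unfold window
  rw [coe_list_int, List.map_map]
  rfl

lemma window_length (x : ℤ → A) (m : ℤ) (n : ℕ) : (window x m n).length = n := by
  rw [window_eq_map]; simp

lemma window_getElem (x : ℤ → A) (m : ℤ) (n : ℕ) (i : ℕ) (hi : i < n)
    {h : i < (window x m n).length} : (window x m n)[i] = x (m + i) := by
  simp [window_eq_map]

lemma window_zero (x : ℤ → A) (m : ℤ) : window x m 0 = [] := by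
  rw [window_eq_map]; simp

lemma window_one (x : ℤ → A) (m : ℤ) : window x m 1 = [x m] := by
  rw [window_eq_map]
  have : List.range 1 = [0] := rfl
  rw [this]
  simp

lemma window_append (x : ℤ → A) (m : ℤ) (n₁ n₂ : ℕ) :
    window x m (n₁ + n₂) = window x m n₁ ++ window x (m + n₁) n₂ := by
  simp only [window_eq_map]
  rw [List.range_add, List.map_append, List.map_map]
  congr 1
  apply List.map_congr_left
  intro t ht
  simp only [Function.comp_apply]
  congr 1
  push_cast
  ring

lemma window_cons (x : ℤ → A) (m : ℤ) (n : ℕ) :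
    window x m (n + 1) = x m :: window x (m + 1) n := by
  have h := window_append x m 1 n
  rw [Nat.add_comm 1 n] at h
  rw [h, window_one]
  norm_num

lemma window_infix_nat (x : ℤ → A) (m : ℤ) (d L n : ℕ) (h : d + L ≤ n) :
    window x (m + d) L <:+: window x m n := by
  have e1 : n = d + L + (n - d - L) := by omega
  rw [e1, window_append x m (d + L) (n - d - L), window_append x m d L]
  refine ⟨window x m d, window x (m + ((d + L : ℕ) : ℤ)) (n - d - L), ?_⟩
  simp [List.append_assoc]

lemma window_infix (x : ℤ → A) {m m' : ℤ} {L n : ℕ} (h1 : m ≤ m') (h2 : m' + L ≤ m + n) :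
    window x m' L <:+: window x m n := by
  have hd : m' = m + ((m' - m).toNat : ℤ) := by omega
  rw [hd]
  exact window_infix_nat x m _ L n (by omega)

lemma legal_infix {u w : List A} (h : u <:+: w) (hw : Legal θ w) : Legal θ u := by
  obtain ⟨b, k, W, hW, hinf⟩ := hw
  exact ⟨b, k, W, hW, h.trans hinf⟩

lemma legal_reals (hθ1 : ∀ a, (θ a).Nonempty) {u w : List A} (hu : Legal θ u)
    (hw : w ∈ reals θ u) : Legal θ w := by
  obtain ⟨b, k, W, hW, hinf⟩ := hu
  obtain ⟨s, t, rfl⟩ := hinf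
  obtain ⟨S, hS⟩ := reals_nonempty hθ1 s
  obtain ⟨T, hT⟩ := reals_nonempty hθ1 t
  have hmem : S ++ w ++ T ∈ reals θ (s ++ u ++ t) := by
    rw [mem_reals_append]
    exact ⟨S ++ w, mem_reals_append.2 ⟨S, hS, w, hw, rfl⟩, T, hT, rfl⟩
  exact ⟨b, k + 1, S ++ w ++ T, mem_realsIter_succ'.2 ⟨_, hW, hmem⟩, ⟨S, T, rfl⟩⟩

lemma mem_Xtheta_iff {x : ℤ → A} : x ∈ Xtheta θ ↔ ∀ (m : ℤ) (n : ℕ), Legal θ (window x m n) :=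
  Iff.rfl

/-- `ϑ(X_ϑ) ⊆ X_ϑ`. -/
lemma substSeq_subset_Xtheta (hθ1 : ∀ a, (θ a).Nonempty) (hθ2 : ∀ a, ∀ w ∈ θ a, w ≠ [])
    {y x : ℤ → A} (hy : y ∈ Xtheta θ) (hx : x ∈ substSeq θ y) : x ∈ Xtheta θ := by
  obtain ⟨v, hv, p, hp0, hps, hpv⟩ := hx
  have hlen1 : ∀ j, 1 ≤ (v j).length := fun j => List.length_pos_iff.mpr (hθ2 _ _ (hv j))
  have pmono : ∀ (j : ℤ) (c : ℕ), p j ≤ p (j + c) ∧ (c:ℤ) ≤ p (j + c) - p j := by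
    intro j c
    induction c with
    | zero => simp
    | succ c ih =>
        have h1 := hps (j + c)
        have h2 := hlen1 (j + c)
        have e : j + ((c:ℤ) + 1) = (j + c) + 1 := by ring
        push_cast
        rw [e, h1]
        push_cast at ih
        omega
  -- blocks realise windows
  have hblock : ∀ (cnt : ℕ) (j : ℤ),
      window x (p j) ((p (j + cnt) - p j).toNat) ∈ reals θ (window y j cnt) := by
    intro cnt
    induction cnt with
    | zero => intro j; simp [window_zero, mem_reals_nil]
    | succ cnt ih =>
        intro j
        have hstep := hps j
        have hm := (pmono (j+1) cnt).1
        have e0 : j + ((cnt:ℤ) + 1) = (j + 1) + cnt := by ring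
        have e1 : (p (j + ((cnt:ℕ)+1:ℕ)) - p j).toNat
            = (v j).length + (p ((j+1) + cnt) - p (j+1)).toNat := by
          push_cast
          rw [e0]
          omega
        rw [e1, window_append x (p j) (v j).length ((p ((j+1) + cnt) - p (j+1)).toNat)]
        have e2 : window x (p j) (v j).length = v j := by
          apply List.ext_getElem (by simp [window_length])
          intro i h1 h2
          rw [window_getElem x (p j) (v j).length i (by rwa [window_length] at h1)]
          have := hpv j i (by rwa [window_length] at h1)
          rw [this]
          simp
        rw [e2, ← hstep, window_cons y j cnt]
        exact mem_reals_cons.2 ⟨v j, hv j, _, ih (j+1), rfl⟩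
  intro m n
  set j₁ := min m 0 with hj₁
  set e := max (m + (n:ℤ)) 0 with he
  have hcnt : j₁ + ((e - j₁).toNat : ℤ) = e := by omega
  have hpj₁ : p j₁ ≤ m := by
    have h0 : p j₁ ≤ j₁ - j₁ + p j₁ := by omega
    have : p j₁ + (0 - j₁) ≤ p (j₁ + (0 - j₁).toNat) := by
      have := (pmono j₁ (0 - j₁).toNat).2
      omega
    have hpj0 : p (j₁ + (0 - j₁).toNat) = 0 := by
      rw [show j₁ + ((0 - j₁).toNat:ℤ) = 0 by omega] at *
      exact hp0
    omega
  have hpe : m + (n:ℤ) ≤ p e := by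
    have h2 := (pmono 0 e.toNat).2
    rw [zero_add] at h2
    rw [hp0] at h2
    have he' : ((e.toNat:ℤ)) = e := by omega
    rw [he'] at h2
    omega
  have hLeg : Legal θ (window x (p j₁) ((p e - p j₁).toNat)) := by
    have hby := hblock (e - j₁).toNat j₁
    rw [hcnt] at hby
    exact legal_reals hθ1 (hy j₁ _) hby
  refine legal_infix ?_ hLeg
  apply window_infix x hpj₁
  have hmono := (pmono j₁ (e - j₁).toNat).1
  rw [hcnt] at hmono
  omega

end Windows


section SubstGlue

variable {θ : A → Finset (List A)}

lemma glue_mem_substSeq [Inhabited A] (hθ2 : ∀ a, ∀ w ∈ θ a, w ≠ []) {y : ℤ → A}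
    {V : ℤ → List A} (hV : ∀ j, V j ∈ θ (y j)) : glue V ∈ substSeq θ y := by
  have hne : ∀ j, V j ≠ [] := fun j => hθ2 _ _ (hV j)
  refine ⟨V, hV, cumul V, cumul_zero V, fun j => cumul_succ V j, ?_⟩
  intro j t ht
  have h := glue_spec hne j t ht
  rw [h, List.getD_eq_getElem _ _ ht]
  simp

lemma glue_mem_substSeqPow [Inhabited A] (hθ1 : ∀ a, (θ a).Nonempty)
    (hθ2 : ∀ a, ∀ w ∈ θ a, w ≠ []) :
    ∀ (K : ℕ) (z : ℤ → A) (F : ℤ → List A), (∀ j, F j ∈ realsIter θ K [z j]) →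
      glue F ∈ substSeqPow θ K z := by
  intro K
  induction K with
  | zero =>
      intro z F hF
      have h : glue F = z := glue_ones z (fun j => mem_realsIter_zero.1 (hF j))
      rw [h]
      exact rfl
  | succ K ih =>
      intro z F hF
      have hch : ∀ j, ∃ v, v ∈ θ (z j) ∧ F j ∈ realsIter θ K v := by
        intro j
        obtain ⟨v, hv, hF'⟩ := mem_realsIter_succ.1 (hF j)
        exact ⟨v, mem_reals_singleton.1 hv, hF'⟩
      choose V hV1 hV2 using hch
      have hVne : ∀ j, V j ≠ [] := fun j => hθ2 _ _ (hV1 j)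
      have hdec := fun j => realsIter_decomp (hV2 j)
      choose G hG1 hG2 hG3 using hdec
      set W : ℤ → List A := fun s =>
        (G (blockIdx V s)).getD (s - cumul V (blockIdx V s)).toNat [] with hW
      have hblock : ∀ (j : ℤ) (i : ℕ), i < (V j).length →
          W (cumul V j + (i:ℤ)) = (G j).getD i [] := by
        intro j i hi
        have hb : blockIdx V (cumul V j + (i:ℤ)) = j := by
          refine blockIdx_eq V hVne (by omega) ?_
          rw [cumul_succ]
          omega
        rw [hW]
        show (G (blockIdx V (cumul V j + (i:ℤ)))).getD
          ((cumul V j + (i:ℤ)) - cumul V (blockIdx V (cumul V j + (i:ℤ)))).toNat [] = _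
        rw [hb]
        congr 1
        omega
      have hWmem : ∀ s, W s ∈ realsIter θ K [glue V s] := by
        intro s
        obtain ⟨hs1, hs2⟩ := blockIdx_spec V hVne s
        set j := blockIdx V s with hj
        set i := (s - cumul V j).toNat with hi
        have hilt : i < (V j).length := by
          have := cumul_succ V j
          omega
        have hGl : i < (G j).length := by rw [hG1]; exact hilt
        have h1 : (G j)[i]? = some ((G j).getD i []) := by
          rw [List.getElem?_eq_getElem hGl, List.getD_eq_getElem _ _ hGl]
        have h2 : (V j)[i]? = some ((V j).getD i default) := by
          rw [List.getElem?_eq_getElem hilt, List.getD_eq_getElem _ _ hilt]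
        exact hG3 j i _ _ h1 h2
      have hWne : ∀ s, W s ≠ [] :=
        fun s => ne_nil_of_mem_realsIter hθ2 (by simp) (hWmem s)
      have hgroup : ∀ j, ((List.range (V j).length).map
          (fun i : ℕ => W (cumul V j + (i:ℤ)))).flatten = F j := by
        intro j
        have h : (List.range (V j).length).map (fun i : ℕ => W (cumul V j + (i:ℤ))) = G j := by
          apply List.ext_getElem (by simp [hG1])
          intro i h1 h2
          simp only [List.getElem_map, List.getElem_range]
          rw [hblock j i (by simpa using h1)]
          exact List.getD_eq_getElem _ _ h2
        rw [h, hG2]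
      have hFeq : F = fun j => ((List.range (V j).length).map
          (fun i : ℕ => W (cumul V j + (i:ℤ)))).flatten := by
        funext j
        rw [hgroup]
      have hglue : glue F = glue W := by
        rw [hFeq]
        exact glue_group V W hVne hWne
      have hmem : glue V ∈ substSeq θ z := glue_mem_substSeq hθ2 hV1
      have hKmem : glue W ∈ substSeqPow θ K (glue V) := ih (glue V) W hWmem
      rw [hglue]
      show glue W ∈ ⋃ z' ∈ substSeq θ z, substSeqPow θ K z'
      exact Set.mem_biUnion hmem hKmem

/-- Descent along recognisability: a point with two `ϑ^K`-preimages in `X_ϑ` forces the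
preimages to coincide. -/
lemma descend_pow (hθ1 : ∀ a, (θ a).Nonempty) (hθ2 : ∀ a, ∀ w ∈ θ a, w ≠ [])
    (hrec : Recognisable θ) :
    ∀ (K : ℕ) (z₁ z₂ x : ℤ → A), z₁ ∈ Xtheta θ → z₂ ∈ Xtheta θ →
      x ∈ substSeqPow θ K z₁ → x ∈ substSeqPow θ K z₂ → z₁ = z₂ := by
  intro K
  induction K with
  | zero =>
      intro z₁ z₂ x _ _ h1 h2
      have e1 : x = z₁ := h1
      have e2 : x = z₂ := h2
      rw [← e1, ← e2]
  | succ K ih =>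
      intro z₁ z₂ x hz₁ hz₂ h1 h2
      have h1' : x ∈ ⋃ z' ∈ substSeq θ z₁, substSeqPow θ K z' := h1
      have h2' : x ∈ ⋃ z' ∈ substSeq θ z₂, substSeqPow θ K z' := h2
      obtain ⟨z₁', hz₁', hx₁⟩ := Set.mem_iUnion₂.1 h1'
      obtain ⟨z₂', hz₂', hx₂⟩ := Set.mem_iUnion₂.1 h2'
      have hz₁'X : z₁' ∈ Xtheta θ := substSeq_subset_Xtheta hθ1 hθ2 hz₁ hz₁'
      have hz₂'X : z₂' ∈ Xtheta θ := substSeq_subset_Xtheta hθ1 hθ2 hz₂ hz₂'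
      have heq : z₁' = z₂' := ih z₁' z₂' x hz₁'X hz₂'X hx₁ hx₂
      subst heq
      obtain ⟨p, hp, hup⟩ := hrec z₁' hz₁'X
      have hmax : ∀ c : A, 0 < maxLen θ c := by
        intro c
        obtain ⟨w, hw⟩ := hθ1 c
        exact lt_of_lt_of_le (List.length_pos_iff.mpr (hθ2 _ _ hw)) (Finset.le_sup hw)
      have hid : (fun i : ℤ => z₁' (i - ((0:ℕ):ℤ))) = z₁' := by
        funext i
        norm_num
      have e1 := hup (z₁, (0:ℕ)) ⟨hz₁, hmax (z₁ 0), by rw [hid]; exact hz₁'⟩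
      have e2 := hup (z₂, (0:ℕ)) ⟨hz₂, hmax (z₂ 0), by rw [hid]; exact hz₂'⟩
      have e3 := e1.trans e2.symm
      exact congrArg Prod.fst e3

end SubstGlue


section Primitivity

variable {θ : A → Finset (List A)} {P : A → List A → ℝ}

lemma substM_nonneg (hRS : IsRandomSubstitution θ P) (i j : A) : 0 ≤ substM θ P i j := by
  obtain ⟨h1, h2, h3, h4, h5⟩ := hRS
  apply Finset.sum_nonneg
  intro w hw
  have := (h3 j w hw).le
  positivity

lemma substM_pow_nonneg (hRS : IsRandomSubstitution θ P) (k : ℕ) :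
    ∀ i j, 0 ≤ (substM θ P ^ k) i j := by
  induction k with
  | zero =>
      intro i j
      rw [pow_zero]
      by_cases h : i = j <;> simp [Matrix.one_apply, h]
  | succ k ih =>
      intro i j
      rw [pow_succ, Matrix.mul_apply]
      exact Finset.sum_nonneg fun c _ => mul_nonneg (ih i c) (substM_nonneg hRS c j)

/-- Matrix positivity implies combinatorial reachability. -/
lemma reach (hRS : IsRandomSubstitution θ P) :
    ∀ (k : ℕ) (i j : A), 0 < (substM θ P ^ k) i j → ∃ w ∈ realsIter θ k [j], i ∈ w := by
  intro k
  induction k with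
  | zero =>
      intro i j h
      rw [pow_zero] at h
      by_cases hij : i = j
      · exact ⟨[j], mem_realsIter_zero.2 rfl, by simp [hij]⟩
      · simp [Matrix.one_apply, hij] at h
  | succ k ih =>
      intro i j h
      rw [pow_succ, Matrix.mul_apply] at h
      have hex : ∃ c, 0 < (substM θ P ^ k) i c * substM θ P c j := by
        by_contra hc
        push_neg at hc
        have hz : ∀ c ∈ Finset.univ, (substM θ P ^ k) i c * substM θ P c j = 0 := by
          intro c _
          have hnn := mul_nonneg (substM_pow_nonneg hRS k i c) (substM_nonneg hRS c j)
          have := hc c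
          linarith
        rw [Finset.sum_congr rfl hz, Finset.sum_const_zero] at h
        exact lt_irrefl 0 h
      obtain ⟨c, hc⟩ := hex
      have hA := substM_pow_nonneg hRS k i c
      have hB := substM_nonneg hRS c j
      have h1 : 0 < (substM θ P ^ k) i c := by nlinarith
      have h2 : 0 < substM θ P c j := by nlinarith
      have hw : ∃ w ∈ θ j, 0 < w.count c := by
        by_contra hcon
        push_neg at hcon
        have hz : ∀ w ∈ θ j, P j w * ((w.count c : ℕ) : ℝ) = 0 := by
          intro w hw
          have := hcon w hw
          have hc0 : w.count c = 0 := by omega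
          rw [hc0]
          simp
        have : substM θ P c j = 0 := by
          show ∑ w ∈ θ j, P j w * ((w.count c : ℕ) : ℝ) = 0
          rw [Finset.sum_congr rfl hz, Finset.sum_const_zero]
        linarith
      obtain ⟨w₀, hw₀, hcnt⟩ := hw
      have hcmem : c ∈ w₀ := by
        by_contra hnc
        rw [List.count_eq_zero_of_not_mem hnc] at hcnt
        omega
      obtain ⟨s, t, rfl⟩ := List.append_of_mem hcmem
      obtain ⟨w', hw', hiw⟩ := ih i c h1
      obtain ⟨S, hS⟩ := realsIter_nonempty hRS.1 k s
      obtain ⟨T, hT⟩ := realsIter_nonempty hRS.1 k t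
      have hmid : w' ++ T ∈ realsIter θ k ([c] ++ t) :=
        mem_realsIter_append.2 ⟨w', hw', T, hT, rfl⟩
      have hmem : S ++ (w' ++ T) ∈ realsIter θ k (s ++ ([c] ++ t)) :=
        mem_realsIter_append.2 ⟨S, hS, w' ++ T, hmid, rfl⟩
      refine ⟨S ++ (w' ++ T), mem_realsIter_succ.2 ⟨s ++ c :: t,
        mem_reals_singleton.2 hw₀, hmem⟩, by simp [hiw]⟩

lemma sum_count_eq_length (w : List A) : ∑ i : A, w.count i = w.length := by
  induction w with
  | nil => simp
  | cons a w ih =>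
      have hc : ∀ i : A, (a :: w).count i = w.count i + if a = i then 1 else 0 := by
        intro i
        rw [List.count_cons]
        congr 1
        by_cases h : i = a
        · subst h; simp
        · have h1 : ¬ a = i := fun hh => h hh.symm
          rw [if_neg (by simpa using h1), if_neg h1]
      simp only [hc]
      rw [Finset.sum_add_distrib, ih, Finset.sum_ite_eq Finset.univ a (fun _ => 1)]
      simp

lemma exists_long_word [Nonempty A] (hRS : IsRandomSubstitution θ P)
    (hexp : IsExpanding θ P) : ∃ b : A, ∃ w ∈ θ b, 2 ≤ w.length := by
  by_contra hcon
  push_neg at hcon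
  obtain ⟨h1, h2, h3, h4, h5⟩ := hRS
  have hl1 : ∀ b : A, ∀ w ∈ θ b, w.length = 1 := by
    intro b w hw
    have hlt := hcon b w hw
    have hpos : 0 < w.length := List.length_pos_iff.mpr (h2 b w hw)
    omega
  obtain ⟨lam, hlam, R, hR, hMR⟩ := hexp
  have hcol : ∀ j, ∑ i : A, substM θ P i j = 1 := by
    intro j
    have e : ∑ i : A, substM θ P i j = ∑ w ∈ θ j, ∑ i : A, P j w * ((w.count i : ℕ) : ℝ) := by
      rw [Finset.sum_comm]
      rfl
    rw [e]
    have e2 : ∀ w ∈ θ j, ∑ i : A, P j w * ((w.count i : ℕ) : ℝ) = P j w := by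
      intro w hw
      rw [← Finset.mul_sum]
      have hcnt : ∑ i : A, ((w.count i : ℕ) : ℝ) = (w.length : ℝ) := by
        rw [← Nat.cast_sum]
        rw [sum_count_eq_length]
      rw [hcnt, hl1 j w hw]
      simp
    rw [Finset.sum_congr rfl e2, h5 j]
  have hs1 : ∑ i : A, (substM θ P).mulVec R i = lam * ∑ i : A, R i := by
    rw [hMR]
    simp [Finset.mul_sum]
  have hs2 : ∑ i : A, (substM θ P).mulVec R i = ∑ j : A, R j := by
    have e : ∀ i : A, (substM θ P).mulVec R i = ∑ j : A, substM θ P i j * R j := fun i => rfl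
    simp only [e]
    rw [Finset.sum_comm]
    have e2 : ∀ j : A, ∑ i : A, substM θ P i j * R j = R j := by
      intro j
      rw [← Finset.sum_mul, hcol j, one_mul]
    rw [Finset.sum_congr rfl (fun j _ => e2 j)]
  have hRpos : 0 < ∑ i : A, R i :=
    Finset.sum_pos (fun i _ => hR i) Finset.univ_nonempty
  nlinarith

lemma exists_double_letter (hRS : IsRandomSubstitution θ P) (k0 : ℕ)
    (hk0 : ∀ i j : A, ∃ w ∈ realsIter θ k0 [j], i ∈ w)
    {b : A} {w0 : List A} (hw0 : w0 ∈ θ b) (hlen2 : 2 ≤ w0.length) :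
    ∃ w ∈ realsIter θ (k0 + 1) [b], 2 ≤ w.count b := by
  obtain ⟨c1, w1, rfl⟩ : ∃ c1 w1, w0 = c1 :: w1 := by
    cases w0 with
    | nil => simp at hlen2
    | cons c1 w1 => exact ⟨c1, w1, rfl⟩
  obtain ⟨c2, w2, rfl⟩ : ∃ c2 w2, w1 = c2 :: w2 := by
    cases w1 with
    | nil => simp at hlen2
    | cons c2 w2 => exact ⟨c2, w2, rfl⟩
  obtain ⟨x1, hx1, hbx1⟩ := hk0 b c1
  obtain ⟨x2, hx2, hbx2⟩ := hk0 b c2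
  obtain ⟨X, hX⟩ := realsIter_nonempty hRS.1 k0 w2
  have hmid : x2 ++ X ∈ realsIter θ k0 ([c2] ++ w2) :=
    mem_realsIter_append.2 ⟨x2, hx2, X, hX, rfl⟩
  have hall : x1 ++ (x2 ++ X) ∈ realsIter θ k0 ([c1] ++ ([c2] ++ w2)) :=
    mem_realsIter_append.2 ⟨x1, hx1, x2 ++ X, hmid, rfl⟩
  refine ⟨x1 ++ (x2 ++ X), mem_realsIter_succ.2 ⟨c1 :: c2 :: w2,
    mem_reals_singleton.2 hw0, hall⟩, ?_⟩
  have hc1 : 1 ≤ x1.count b := List.count_pos_iff.2 hbx1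
  have hc2 : 1 ≤ x2.count b := List.count_pos_iff.2 hbx2
  simp only [List.count_append]
  omega

lemma exists_many_letters (hRS : IsRandomSubstitution θ P) (k0 : ℕ)
    (hk0 : ∀ i j : A, ∃ w ∈ realsIter θ k0 [j], i ∈ w)
    {b : A} {w0 : List A} (hw0 : w0 ∈ θ b) (hlen2 : 2 ≤ w0.length) :
    ∀ m : ℕ, ∃ w ∈ realsIter θ (m * (k0 + 1)) [b], m + 1 ≤ w.count b := by
  obtain ⟨wb, hwb, hwb2⟩ := exists_double_letter hRS k0 hk0 hw0 hlen2
  have amp : ∀ u : List A, ∃ w' ∈ realsIter θ (k0 + 1) u, 2 * u.count b ≤ w'.count b := by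
    intro u
    induction u with
    | nil => exact ⟨[], mem_realsIter_nil.2 rfl, by simp⟩
    | cons c u ihu =>
        obtain ⟨w', hw', hc'⟩ := ihu
        by_cases hcb : c = b
        · subst hcb
          refine ⟨wb ++ w', mem_realsIter_append.2 ⟨wb, hwb, w', hw', rfl⟩, ?_⟩
          simp only [List.count_append, List.count_cons_self]
          omega
        · obtain ⟨wc, hwc⟩ := realsIter_nonempty hRS.1 (k0 + 1) [c]
          refine ⟨wc ++ w', mem_realsIter_append.2 ⟨wc, hwc, w', hw', rfl⟩, ?_⟩
          rw [List.count_cons_of_ne hcb]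
          simp only [List.count_append]
          omega
  intro m
  induction m with
  | zero =>
      refine ⟨[b], ?_, by simp⟩
      rw [Nat.zero_mul]
      exact mem_realsIter_zero.2 rfl
  | succ m ih =>
      obtain ⟨w, hw, hcnt⟩ := ih
      obtain ⟨w', hw', hcnt'⟩ := amp w
      have e : (m + 1) * (k0 + 1) = m * (k0 + 1) + (k0 + 1) := by ring
      rw [e]
      exact ⟨w', mem_realsIter_add.2 ⟨w, hw, hw'⟩, by omega⟩

lemma exists_centered (hRS : IsRandomSubstitution θ P) (hprim : IsPrimitive θ P)
    (hexp : IsExpanding θ P) (a : A) (n : ℕ) :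
    ∃ x y : List A, n ≤ x.length ∧ n ≤ y.length ∧ Legal θ (x ++ a :: y) := by
  haveI : Nonempty A := ⟨a⟩
  obtain ⟨k0, hk0'⟩ := hprim
  have hk0 : ∀ i j : A, ∃ w ∈ realsIter θ k0 [j], i ∈ w :=
    fun i j => reach hRS k0 i j (hk0' i j)
  obtain ⟨b, w0, hw0, hlen2⟩ := exists_long_word hRS hexp
  obtain ⟨w, hw, hcnt⟩ := exists_many_letters hRS k0 hk0 hw0 hlen2 (2 * n)
  have hlenw : 2 * n + 1 ≤ w.length := le_trans hcnt (w.count_le_length : w.count b ≤ w.length)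
  have hnlt : n < w.length := by omega
  have hsplit : w = w.take n ++ ([w[n]] ++ w.drop (n + 1)) := by
    conv_lhs => rw [← List.take_append_drop n w]
    rw [List.drop_eq_getElem_cons hnlt]
    rfl
  obtain ⟨X, hX⟩ := realsIter_nonempty hRS.1 k0 (w.take n)
  obtain ⟨Y, hY⟩ := realsIter_nonempty hRS.1 k0 (w.drop (n + 1))
  obtain ⟨Z, hZ, haZ⟩ := hk0 a w[n]
  have hmid : Z ++ Y ∈ realsIter θ k0 ([w[n]] ++ w.drop (n + 1)) :=
    mem_realsIter_append.2 ⟨Z, hZ, Y, hY, rfl⟩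
  have hbig : X ++ (Z ++ Y) ∈ realsIter θ k0 w := by
    rw [hsplit]
    exact mem_realsIter_append.2 ⟨X, hX, Z ++ Y, hmid, rfl⟩
  have hbig2 : X ++ (Z ++ Y) ∈ realsIter θ (2 * n * (k0 + 1) + k0) [b] :=
    mem_realsIter_add.2 ⟨w, hw, hbig⟩
  have hlegal : Legal θ (X ++ (Z ++ Y)) :=
    ⟨b, _, X ++ (Z ++ Y), hbig2, List.infix_refl _⟩
  obtain ⟨Z1, Z2, rfl⟩ := List.append_of_mem haZ
  refine ⟨X ++ Z1, Z2 ++ Y, ?_, ?_, ?_⟩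
  · have h1 := length_le_of_mem_realsIter hRS.2.1 hX
    rw [List.length_take] at h1
    simp only [List.length_append]
    omega
  · have h1 := length_le_of_mem_realsIter hRS.2.1 hY
    rw [List.length_drop] at h1
    simp only [List.length_append]
    omega
  · exact legal_infix ⟨[], [], by simp [List.append_assoc]⟩ hlegal

end Primitivity

section Point

variable {θ : A → Finset (List A)} {P : A → List A → ℝ}

/-- Existence of a point of `X_ϑ` with a prescribed letter at the origin. -/
lemma exists_Xtheta_point (hRS : IsRandomSubstitution θ P) (hprim : IsPrimitive θ P)
    (hexp : IsExpanding θ P) (a : A) : ∃ y ∈ Xtheta θ, y 0 = a := by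
  classical
  choose xs ys hx hy hleg using exists_centered hRS hprim hexp a
  set f : ℕ → ℤ → A := fun n t =>
    if t < 0 then (xs n).getD (((xs n).length : ℤ) + t).toNat a
    else (a :: ys n).getD t.toNat a with hf
  set U : Ultrafilter ℕ := Ultrafilter.of atTop with hU
  have hUatTop : ∀ s ∈ (atTop : Filter ℕ), s ∈ U := fun s hs => Ultrafilter.of_le atTop hs
  have hex : ∀ t : ℤ, ∃ c : A, {n | f n t = c} ∈ U := by
    intro t
    by_contra hc'
    push_neg at hc'
    have hall : ∀ c : A, {n | f n t = c}ᶜ ∈ U :=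
      fun c => Ultrafilter.compl_mem_iff_notMem.2 (hc' c)
    have hint : (⋂ c : A, {n | f n t = c}ᶜ) ∈ U := Filter.iInter_mem.2 hall
    have hempty : (⋂ c : A, {n | f n t = c}ᶜ) = ∅ := by
      ext n
      simp only [Set.mem_iInter, Set.mem_compl_iff, Set.mem_setOf_eq, Set.mem_empty_iff_false,
        iff_false, not_forall, not_not]
      exact ⟨f n t, rfl⟩
    rw [hempty] at hint
    exact Filter.empty_notMem (U : Filter ℕ) hint
  choose g hg using hex
  -- full window of f n equals the legal word
  have hfull : ∀ n, window (f n) (-(((xs n).length : ℕ) : ℤ)) ((xs n).length + (1 + (ys n).length))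
      = xs n ++ a :: ys n := by
    intro n
    apply List.ext_getElem (by simp [window_length]; omega)
    intro i h1 h2
    rw [window_length] at h1
    rw [window_getElem (f n) _ _ i h1]
    rw [List.length_append, List.length_cons] at h2
    by_cases hi : i < (xs n).length
    · have ht : (-(((xs n).length : ℕ) : ℤ) + (i:ℤ)) < 0 := by omega
      rw [hf]
      simp only [if_pos ht]
      rw [show (((xs n).length : ℤ) + (-(((xs n).length : ℕ) : ℤ) + (i:ℤ))).toNat = i by omega]
      rw [List.getD_eq_getElem _ _ hi]
      rw [List.getElem_append_left hi]
    · have ht : ¬ (-(((xs n).length : ℕ) : ℤ) + (i:ℤ)) < 0 := by omega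
      rw [hf]
      simp only [if_neg ht]
      rw [List.getElem_append_right (by omega)]
      have hidx : ((-(((xs n).length : ℕ) : ℤ) + (i:ℤ)).toNat) = i - (xs n).length := by omega
      rw [hidx]
      have hlt : i - (xs n).length < (a :: ys n).length := by
        rw [List.length_cons]
        omega
      rw [List.getD_eq_getElem _ _ hlt]
  refine ⟨g, ?_, ?_⟩
  · intro m L
    have hTm : {n | ∀ i : ℕ, i < L → f n (m + i) = g (m + i)} ∈ U := by
      have e : {n | ∀ i : ℕ, i < L → f n (m + i) = g (m + i)}
          = ⋂ i ∈ Finset.range L, {n | f n (m + i) = g (m + i)} := by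
        ext n
        simp [Finset.mem_range]
      rw [e]
      exact (Filter.biInter_finset_mem _).2 fun i _ => hg (m + i)
    have hbig : {n | (max m.natAbs (m + (L:ℤ)).natAbs) ≤ n} ∈ U :=
      hUatTop _ (Filter.mem_atTop _)
    obtain ⟨N, hN⟩ := Filter.nonempty_of_mem (Filter.inter_mem hTm hbig)
    obtain ⟨hN1, hN2⟩ := hN
    have hN2' : max m.natAbs (m + (L:ℤ)).natAbs ≤ N := hN2
    have hwin : window g m L = window (f N) m L := by
      apply List.ext_getElem (by simp [window_length])
      intro i h1 h2
      rw [window_length] at h1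
      rw [window_getElem g m L i h1, window_getElem (f N) m L i h1]
      exact (hN1 i h1).symm
    rw [hwin]
    refine legal_infix ?_ ((hfull N) ▸ hleg N)
    apply window_infix (f N)
    · have h1 : (m.natAbs : ℤ) ≤ ((xs N).length : ℤ) := by
        have := hx N
        omega
      have h2 : -(m.natAbs : ℤ) ≤ m := by omega
      omega
    · have h1 : ((m + (L:ℤ)).natAbs : ℤ) ≤ ((ys N).length : ℤ) := by
        have := hy N
        omega
      have h2 : m + (L:ℤ) ≤ ((m + (L:ℤ)).natAbs : ℤ) := Int.le_natAbs
      push_cast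
      omega
  · obtain ⟨N, hN⟩ := Filter.nonempty_of_mem (hg 0)
    have hfN : f N 0 = a := by
      rw [hf]
      norm_num
    have hN' : f N 0 = g 0 := hN
    exact hN'.symm.trans hfN

end Point



theorem statement15 {A : Type*} [Fintype A] [DecidableEq A]
    (θ : A → Finset (List A)) (P : A → List A → ℝ)
    (hRS : IsRandomSubstitution θ P) (hprim : IsPrimitive θ P) (hexp : IsExpanding θ P)
    (hlen : ∀ a : A, ∀ u ∈ θ a, ∀ v ∈ θ a, u.length = v.length)
    (hrec : Recognisable θ) :
    DisjointSetCondition θ := by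
  intro a k u hu v hv huv w hwu hwv
  haveI : Inhabited A := ⟨a⟩
  have hθ1 := hRS.1
  have hθ2 := hRS.2.1
  obtain ⟨g, hg1, hg2, hg3⟩ := realsIter_decomp hwu
  obtain ⟨h, hh1, hh2, hh3⟩ := realsIter_decomp hwv
  obtain ⟨y, hyX, hy0⟩ := exists_Xtheta_point hRS hprim hexp a
  set V₁ : ℤ → List A := fun j => if j = 0 then u else ((hθ1 (y j)).choose) with hV₁
  set V₂ : ℤ → List A := fun j => if j = 0 then v else ((hθ1 (y j)).choose) with hV₂
  have hV₁mem : ∀ j, V₁ j ∈ θ (y j) := by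
    intro j
    by_cases hj : j = 0
    · subst hj
      simp only [hV₁, if_pos rfl, hy0]
      exact hu
    · simp only [hV₁, if_neg hj]
      exact (hθ1 (y j)).choose_spec
  have hV₂mem : ∀ j, V₂ j ∈ θ (y j) := by
    intro j
    by_cases hj : j = 0
    · subst hj
      simp only [hV₂, if_pos rfl, hy0]
      exact hv
    · simp only [hV₂, if_neg hj]
      exact (hθ1 (y j)).choose_spec
  have hV₁ne : ∀ j, V₁ j ≠ [] := fun j => hθ2 _ _ (hV₁mem j)
  have hV₂ne : ∀ j, V₂ j ≠ [] := fun j => hθ2 _ _ (hV₂mem j)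
  have hV10 : V₁ 0 = u := by simp [hV₁]
  have hV20 : V₂ 0 = v := by simp [hV₂]
  set z₁ := glue V₁ with hz₁
  set z₂ := glue V₂ with hz₂
  have hz₁sub : z₁ ∈ substSeq θ y := glue_mem_substSeq hθ2 hV₁mem
  have hz₂sub : z₂ ∈ substSeq θ y := glue_mem_substSeq hθ2 hV₂mem
  have hz₁X : z₁ ∈ Xtheta θ := substSeq_subset_Xtheta hθ1 hθ2 hyX hz₁sub
  have hz₂X : z₂ ∈ Xtheta θ := substSeq_subset_Xtheta hθ1 hθ2 hyX hz₂sub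
  have hlenuv : u.length = v.length := hlen a u hu v hv
  have hVlen : ∀ j, (V₁ j).length = (V₂ j).length := by
    intro j
    by_cases hj : j = 0 <;> simp [hV₁, hV₂, hj, hlenuv]
  have hcVeq : cumul V₁ = cumul V₂ := cumul_congr_length hVlen
  have hbeq : ∀ s, blockIdx V₁ s = blockIdx V₂ s := by
    intro s
    unfold blockIdx
    rw [hcVeq]
  have hcV1 : cumul V₁ 1 = (u.length : ℤ) := by
    have hc := cumul_succ V₁ 0
    simp only [cumul_zero, zero_add, hV10] at hc
    exact hc
  have hz₁blk : ∀ i : ℕ, i < u.length → z₁ (i:ℤ) = u.getD i default := by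
    intro i hi
    have hs := glue_spec hV₁ne 0 i (by rw [hV10]; exact hi)
    rw [cumul_zero, zero_add, hV10] at hs
    exact hs
  have hz₂blk : ∀ i : ℕ, i < u.length → z₂ (i:ℤ) = v.getD i default := by
    intro i hi
    have hs := glue_spec hV₂ne 0 i (by rw [hV20]; omega)
    rw [cumul_zero, zero_add, hV20] at hs
    exact hs
  have hzout : ∀ s : ℤ, s < 0 ∨ (u.length : ℤ) ≤ s → z₁ s = z₂ s := by
    intro s hs
    obtain ⟨hb1, hb2⟩ := blockIdx_spec V₁ hV₁ne s
    set j := blockIdx V₁ s with hj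
    have hjne : j ≠ 0 := by
      intro h0
      rw [h0, cumul_zero] at hb1
      rw [h0, show (0:ℤ) + 1 = 1 by ring, hcV1] at hb2
      omega
    show (V₁ (blockIdx V₁ s)).getD (s - cumul V₁ (blockIdx V₁ s)).toNat default
      = (V₂ (blockIdx V₂ s)).getD (s - cumul V₂ (blockIdx V₂ s)).toNat default
    rw [← hbeq s, ← hj, ← hcVeq]
    congr 1
    simp only [hV₁, hV₂, if_neg hjne]
  have hne12 : z₁ ≠ z₂ := by
    have hex : ∃ i : ℕ, i < u.length ∧ u.getD i default ≠ v.getD i default := by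
      by_contra hcon
      push_neg at hcon
      refine absurd ?_ huv
      apply List.ext_getElem hlenuv
      intro i h1 h2
      have hci := hcon i h1
      rwa [List.getD_eq_getElem _ _ h1, List.getD_eq_getElem _ _ h2] at hci
    obtain ⟨i, hi, hiv⟩ := hex
    intro hEq
    apply hiv
    rw [← hz₁blk i hi, ← hz₂blk i hi, hEq]
  set F₁ : ℤ → List A := fun s => if hs : 0 ≤ s ∧ s < (u.length : ℤ) then g.getD s.toNat []
    else (realsIter_nonempty hθ1 k [z₁ s]).choose with hF₁
  set F₂ : ℤ → List A := fun s => if hs : 0 ≤ s ∧ s < (u.length : ℤ) then h.getD s.toNat []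
    else (realsIter_nonempty hθ1 k [z₂ s]).choose with hF₂
  have hF₁mem : ∀ s, F₁ s ∈ realsIter θ k [z₁ s] := by
    intro s
    by_cases hs : 0 ≤ s ∧ s < (u.length : ℤ)
    · simp only [hF₁, dif_pos hs]
      have hidx : s.toNat < u.length := by omega
      have hgl : s.toNat < g.length := by rw [hg1]; exact hidx
      have h1 : g[s.toNat]? = some (g.getD s.toNat []) := by
        rw [List.getElem?_eq_getElem hgl, List.getD_eq_getElem _ _ hgl]
      have h2 : u[s.toNat]? = some (u.getD s.toNat default) := by
        rw [List.getElem?_eq_getElem hidx, List.getD_eq_getElem _ _ hidx]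
      have hmem := hg3 s.toNat _ _ h1 h2
      have hzv : z₁ s = u.getD s.toNat default := by
        conv_lhs => rw [show s = ((s.toNat : ℕ) : ℤ) by omega]
        exact hz₁blk s.toNat hidx
      rw [hzv]
      exact hmem
    · simp only [hF₁, dif_neg hs]
      exact (realsIter_nonempty hθ1 k [z₁ s]).choose_spec
  have hF₂mem : ∀ s, F₂ s ∈ realsIter θ k [z₂ s] := by
    intro s
    by_cases hs : 0 ≤ s ∧ s < (u.length : ℤ)
    · simp only [hF₂, dif_pos hs]
      have hidx : s.toNat < u.length := by omega
      have hidxv : s.toNat < v.length := by omega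
      have hgl : s.toNat < h.length := by rw [hh1]; exact hidxv
      have h1 : h[s.toNat]? = some (h.getD s.toNat []) := by
        rw [List.getElem?_eq_getElem hgl, List.getD_eq_getElem _ _ hgl]
      have h2 : v[s.toNat]? = some (v.getD s.toNat default) := by
        rw [List.getElem?_eq_getElem hidxv, List.getD_eq_getElem _ _ hidxv]
      have hmem := hh3 s.toNat _ _ h1 h2
      have hzv : z₂ s = v.getD s.toNat default := by
        conv_lhs => rw [show s = ((s.toNat : ℕ) : ℤ) by omega]
        exact hz₂blk s.toNat hidx
      rw [hzv]
      exact hmem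
    · simp only [hF₂, dif_neg hs]
      exact (realsIter_nonempty hθ1 k [z₂ s]).choose_spec
  have hFout : ∀ s : ℤ, s < 0 ∨ (u.length : ℤ) ≤ s → F₁ s = F₂ s := by
    intro s hs
    have hns : ¬ (0 ≤ s ∧ s < (u.length : ℤ)) := by omega
    simp only [hF₁, hF₂, dif_neg hns]
    exact congrArg (fun c => (realsIter_nonempty hθ1 k [c]).choose) (hzout s hs)
  have hF₁ne : ∀ s, F₁ s ≠ [] := fun s => ne_nil_of_mem_realsIter hθ2 (by simp) (hF₁mem s)
  have hF₂ne : ∀ s, F₂ s ≠ [] := fun s => ne_nil_of_mem_realsIter hθ2 (by simp) (hF₂mem s)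
  have hflat1 : ((List.range u.length).map (fun i : ℕ => F₁ (i:ℤ))).flatten = w := by
    have e : (List.range u.length).map (fun i : ℕ => F₁ (i:ℤ)) = g := by
      apply List.ext_getElem (by simp [hg1])
      intro i h1 h2
      simp only [List.getElem_map, List.getElem_range]
      have hi : i < u.length := by simpa using h1
      simp only [hF₁]
      rw [dif_pos (by constructor <;> omega : 0 ≤ ((i:ℕ):ℤ) ∧ ((i:ℕ):ℤ) < (u.length : ℤ))]
      rw [show ((i:ℕ):ℤ).toNat = i by omega]
      exact List.getD_eq_getElem _ _ h2
    rw [e, hg2]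
  have hflat2 : ((List.range u.length).map (fun i : ℕ => F₂ (i:ℤ))).flatten = w := by
    have e : (List.range u.length).map (fun i : ℕ => F₂ (i:ℤ)) = h := by
      apply List.ext_getElem (by simp [hh1]; omega)
      intro i h1 h2
      simp only [List.getElem_map, List.getElem_range]
      have hi : i < u.length := by simpa using h1
      simp only [hF₂]
      rw [dif_pos (by constructor <;> omega : 0 ≤ ((i:ℕ):ℤ) ∧ ((i:ℕ):ℤ) < (u.length : ℤ))]
      rw [show ((i:ℕ):ℤ).toNat = i by omega]
      exact List.getD_eq_getElem _ _ h2
    rw [e, hh2]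
  have hglueEq : glue F₁ = glue F₂ :=
    glue_congr_block hF₁ne hF₂ne u.length hFout (by rw [hflat1, hflat2])
  have hx1 : glue F₁ ∈ substSeqPow θ k z₁ := glue_mem_substSeqPow hθ1 hθ2 k z₁ F₁ hF₁mem
  have hx2 : glue F₁ ∈ substSeqPow θ k z₂ := by
    rw [hglueEq]
    exact glue_mem_substSeqPow hθ1 hθ2 k z₂ F₂ hF₂mem
  exact hne12 (descend_pow hθ1 hθ2 hrec k z₁ z₂ (glue F₁) hz₁X hz₂X hx1 hx2)


end RandomSubstitutionTheory
end
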